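/- arXiv:1901.08364 — 6 statements merged into one kernel-verified Lean document; each statement's English description precedes it below -/
import Mathlib

section
/- Let f = a₀ + a₁X + ⋯ + aₙXⁿ ∈ ℝ[X] with aₙ ≠ 0. Let V₊ be the number of sign changes in a₀, a₁, …, aₙ and V₋ the number of sign changes in a₀, −a₁, …, (−1)ⁿ aₙ. Let N₊ (resp. N₋) be the number of positive (resp. negative) real roots of f counted with multiplicity. Then V₊ − N₊ and V₋ − N₋ are non-negative even integers. Moreover, if all complex roots of f are real, then N₊ = V₊ and N₋ = V₋. -/
open Polynomial

/-- The number of sign changes in a list of real numbers, counted after deleting zeros. -/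
noncomputable def signChanges (l : List ℝ) : ℕ :=
  let l' := l.filter (fun a => decide (a ≠ 0))
  (l'.zip l'.tail).countP (fun p => decide (p.1 * p.2 < 0))

namespace DR

/-- number of adjacent sign changes -/
noncomputable def sc2 : List ℝ → ℕ
  | a :: b :: t => (if a * b < 0 then 1 else 0) + sc2 (b :: t)
  | _ => 0

noncomputable def Vc (l : List ℝ) : ℕ := sc2 (l.filter (fun a => decide (a ≠ 0)))

noncomputable def fn (l : List ℝ) : Option ℝ := (l.filter (fun a => decide (a ≠ 0))).head?

noncomputable def chg (x : ℝ) : Option ℝ → ℕ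
  | none => 0
  | some z => if x * z < 0 then 1 else 0

lemma sc2_eq (l : List ℝ) :
    (l.zip l.tail).countP (fun p => decide (p.1 * p.2 < 0)) = sc2 l := by
  match l with
  | [] => rfl
  | [a] => rfl
  | a :: b :: t =>
    have := sc2_eq (b :: t)
    simp only [sc2, List.tail, List.zip_cons_cons, List.countP_cons] at *
    rw [← this]
    simp [add_comm]

lemma filter_cons_ne {x : ℝ} (hx : x ≠ 0) (xs : List ℝ) :
    (x :: xs).filter (fun a => decide (a ≠ 0)) = x :: xs.filter (fun a => decide (a ≠ 0)) := by
  simp [List.filter_cons, hx]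

lemma filter_cons_zero (xs : List ℝ) :
    ((0:ℝ) :: xs).filter (fun a => decide (a ≠ 0)) = xs.filter (fun a => decide (a ≠ 0)) := by
  simp [List.filter_cons]

lemma Vc_cons_zero (xs : List ℝ) : Vc (0 :: xs) = Vc xs := by
  simp [Vc, filter_cons_zero]

lemma fn_cons_zero (xs : List ℝ) : fn (0 :: xs) = fn xs := by
  simp [fn, filter_cons_zero]

lemma fn_cons_ne {x : ℝ} (hx : x ≠ 0) (xs : List ℝ) : fn (x :: xs) = some x := by
  rw [fn, filter_cons_ne hx]; rfl

lemma Vc_cons_ne {x : ℝ} (hx : x ≠ 0) (xs : List ℝ) :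
    Vc (x :: xs) = chg x (fn xs) + Vc xs := by
  rw [Vc, filter_cons_ne hx, Vc, fn]
  cases h : xs.filter (fun a => decide (a ≠ 0)) with
  | nil => simp [sc2, chg]
  | cons z t => simp [sc2, chg]

lemma chg_le_one (x : ℝ) (o : Option ℝ) : chg x o ≤ 1 := by
  cases o <;> simp [chg] <;> split <;> simp

lemma Vc_le_cons (x : ℝ) (xs : List ℝ) : Vc xs ≤ Vc (x :: xs) := by
  rcases eq_or_ne x 0 with rfl | hx
  · rw [Vc_cons_zero]
  · rw [Vc_cons_ne hx]; omega

lemma fn_eq_none_iff (l : List ℝ) : fn l = none ↔ ∀ x ∈ l, x = 0 := by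
  simp [fn, List.head?_eq_none_iff, List.filter_eq_nil_iff]

lemma fn_ne_zero {l : List ℝ} {z : ℝ} (h : fn l = some z) : z ≠ 0 := by
  have hz := List.mem_of_mem_head? (l := l.filter (fun a => decide (a ≠ 0))) h
  have := List.of_mem_filter hz
  simpa using this


noncomputable def T (c : ℝ) : List ℝ → ℝ
  | [] => 0
  | x :: xs => x + c * T c xs

noncomputable def S (c : ℝ) : List ℝ → List ℝ
  | [] => []
  | _ :: xs => T c xs :: S c xs

lemma T_eq_zero {c : ℝ} {l : List ℝ} (h : ∀ x ∈ l, x = 0) : T c l = 0 := by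
  induction l with
  | nil => rfl
  | cons x xs ih =>
    have hx := h x (by simp)
    rw [T, hx, ih (fun y hy => h y (by simp [hy]))]; ring

lemma S_eq_zero {c : ℝ} {l : List ℝ} (h : ∀ x ∈ l, x = 0) : ∀ y ∈ S c l, y = 0 := by
  induction l with
  | nil => simp [S]
  | cons x xs ih =>
    intro y hy
    rw [S] at hy
    rcases List.mem_cons.1 hy with rfl | hy
    · exact T_eq_zero (fun y hy => h y (by simp [hy]))
    · exact ih (fun y hy => h y (by simp [hy])) y hy

lemma Vc_zero {l : List ℝ} (h : ∀ x ∈ l, x = 0) : Vc l = 0 := by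
  have : l.filter (fun a => decide (a ≠ 0)) = [] := by
    rw [List.filter_eq_nil_iff]; intro a ha; simpa using h a ha
  rw [Vc, this]; rfl

section CEsec
variable {c t x : ℝ} {xs Sx : List ℝ}

lemma chg_some (x z : ℝ) : chg x (some z) = if x * z < 0 then 1 else 0 := rfl

lemma K1 (hc : 0 < c) (hT : T c xs = t)
    (IH1 : Vc (t :: Sx) ≤ Vc xs)
    (IH2 : ∀ z, fn xs = some z → (t = 0 ∨ t * z < 0) → Vc (t :: Sx) + 1 ≤ Vc xs)
    (hx : x ≠ 0) (ht : t ≠ 0) (hxt : x * t < 0) :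
    Vc (t :: Sx) + 1 ≤ Vc (x :: xs) := by
  cases hfn : fn xs with
  | none => exact absurd (hT ▸ T_eq_zero ((fn_eq_none_iff xs).1 hfn)) ht
  | some z =>
    have hz := fn_ne_zero hfn
    rcases lt_trichotomy (x * z) 0 with hxz | hxz | hxz
    · have h1 : Vc (x :: xs) = 1 + Vc xs := by
        rw [Vc_cons_ne hx, hfn, chg_some, if_pos hxz]
      omega
    · exact absurd hxz (mul_ne_zero hx hz)
    · have htz : t * z < 0 := by
        have h1 : (x*t)*(x*z) < 0 := mul_neg_of_neg_of_pos hxt hxz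
        nlinarith [sq_nonneg x]
      have h2 := IH2 z hfn (Or.inr htz)
      have h3 := Vc_le_cons x xs
      omega

lemma stepC (hc : 0 < c) (hT : T c xs = t)
    (IH1 : Vc (t :: Sx) ≤ Vc xs)
    (IH2 : ∀ z, fn xs = some z → (t = 0 ∨ t * z < 0) → Vc (t :: Sx) + 1 ≤ Vc xs)
    (hSx : Sx = S c xs) :
    Vc ((x + c * t) :: t :: Sx) ≤ Vc (x :: xs) := by
  rcases eq_or_ne x 0 with rfl | hx
  · rcases eq_or_ne t 0 with rfl | ht
    · rw [show (0:ℝ) + c * 0 = 0 by ring, Vc_cons_zero, Vc_cons_zero]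
      rw [Vc_cons_zero] at IH1
      exact le_trans IH1 (Vc_le_cons _ _)
    · have hu0 : (0:ℝ) + c * t ≠ 0 := by
        simpa using mul_ne_zero (ne_of_gt hc) ht
      rw [Vc_cons_ne hu0, fn_cons_ne ht, Vc_cons_zero]
      have hch : chg (0 + c * t) (some t) = 0 := by
        have h1 : 0 < (0 + c*t) * t := by nlinarith [mul_self_pos.2 ht]
        rw [chg_some, if_neg (not_lt_of_gt h1)]
      omega
  · have hVx : Vc xs ≤ Vc (x :: xs) := Vc_le_cons x xs
    rcases eq_or_ne (x + c * t) 0 with hu | hu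
    · rw [hu, Vc_cons_zero]
      omega
    · rcases eq_or_ne t 0 with rfl | ht
      · rw [show x + c * 0 = x by ring] at hu ⊢
        rw [Vc_cons_ne hx, fn_cons_zero]
        by_cases hxsz : ∀ y ∈ xs, y = 0
        · have h1 : Vc Sx = 0 := Vc_zero (hSx ▸ S_eq_zero hxsz)
          have h2 : fn Sx = none := (fn_eq_none_iff _).2 (hSx ▸ S_eq_zero hxsz)
          rw [Vc_cons_zero, h1, h2]
          simp [chg]
        · obtain ⟨z, hz⟩ : ∃ z, fn xs = some z := by
            cases hfn : fn xs with
            | none => exact absurd ((fn_eq_none_iff xs).1 hfn) hxsz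
            | some z => exact ⟨z, rfl⟩
          have h3 := IH2 z hz (Or.inl rfl)
          rw [Vc_cons_zero] at h3
          have hch := chg_le_one x (fn Sx)
          rw [Vc_cons_zero]
          omega
      · rcases lt_trichotomy ((x + c*t) * t) 0 with hut | hut | hut
        · have hxt : x * t < 0 := by nlinarith [mul_pos hc (mul_self_pos.2 ht)]
          have h4 := K1 hc hT IH1 IH2 hx ht hxt
          rw [Vc_cons_ne hu, fn_cons_ne ht]
          have := chg_le_one (x + c*t) (some t)
          omega
        · exact absurd hut (mul_ne_zero hu ht)
        · rw [Vc_cons_ne hu, fn_cons_ne ht]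
          have hch : chg (x + c*t) (some t) = 0 := by
            rw [chg_some, if_neg (not_lt_of_gt hut)]
          omega

lemma stepE (hc : 0 < c) (hT : T c xs = t)
    (IH1 : Vc (t :: Sx) ≤ Vc xs)
    (IH2 : ∀ z, fn xs = some z → (t = 0 ∨ t * z < 0) → Vc (t :: Sx) + 1 ≤ Vc xs)
    (hSx : Sx = S c xs) :
    ∀ z, fn (x :: xs) = some z → (x + c * t = 0 ∨ (x + c * t) * z < 0) →
      Vc ((x + c * t) :: t :: Sx) + 1 ≤ Vc (x :: xs) := by
  intro z hzfn hcond
  rcases eq_or_ne x 0 with rfl | hx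
  · rw [fn_cons_zero] at hzfn
    rcases eq_or_ne t 0 with rfl | ht
    · rw [show (0:ℝ) + c * 0 = 0 by ring] at *
      rw [Vc_cons_zero, Vc_cons_zero, Vc_cons_zero]
      have h1 := IH2 z hzfn (Or.inl rfl)
      rw [Vc_cons_zero] at h1
      exact h1
    · have hu0 : (0:ℝ) + c * t ≠ 0 := by
        simpa using mul_ne_zero (ne_of_gt hc) ht
      have huz : (0 + c * t) * z < 0 := by
        rcases hcond with h | h
        · exact absurd h hu0
        · exact h
      have htz : t * z < 0 := by nlinarith
      have h1 := IH2 z hzfn (Or.inr htz)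
      rw [Vc_cons_ne hu0, fn_cons_ne ht, Vc_cons_zero]
      have hch : chg (0 + c * t) (some t) = 0 := by
        have hp : 0 < (0 + c*t) * t := by nlinarith [mul_self_pos.2 ht]
        rw [chg_some, if_neg (not_lt_of_gt hp)]
      omega
  · rw [fn_cons_ne hx] at hzfn
    injection hzfn with hzx
    subst hzx
    rcases hcond with hu | hu
    · have ht : t ≠ 0 := by
        intro h; rw [h] at hu; simp at hu; exact hx hu
      have hxt : x * t < 0 := by
        have h3 : (x + c*t) * t = 0 * t := by rw [hu]
        nlinarith [mul_pos hc (mul_self_pos.2 ht), h3]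
      rw [hu, Vc_cons_zero]
      exact K1 hc hT IH1 IH2 hx ht hxt
    · have hu0 : x + c * t ≠ 0 := by
        intro h; rw [h] at hu; simp at hu
      have htu : 0 < t * (x + c * t) := by
        nlinarith [mul_self_pos.2 hu0]
      have ht : t ≠ 0 := by
        intro h; rw [h] at htu; simp at htu
      have hxt : x * t < 0 := by
        nlinarith [mul_self_pos.2 hx]
      rw [Vc_cons_ne hu0, fn_cons_ne ht]
      have hch : chg (x + c*t) (some t) = 0 := by
        have hp : 0 < (x + c*t) * t := by nlinarith
        rw [chg_some, if_neg (not_lt_of_gt hp)]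
      have := K1 hc hT IH1 IH2 hx ht hxt
      omega

end CEsec

theorem CE {c : ℝ} (hc : 0 < c) : ∀ l : List ℝ,
    (Vc (T c l :: S c l) ≤ Vc l) ∧
    (∀ z, fn l = some z → (T c l = 0 ∨ T c l * z < 0) →
      Vc (T c l :: S c l) + 1 ≤ Vc l) := by
  intro l
  induction l with
  | nil =>
    constructor
    · show Vc [(0:ℝ)] ≤ Vc []
      rw [show [(0:ℝ)] = (0:ℝ) :: [] from rfl, Vc_cons_zero]
    · intro z hz
      simp [fn] at hz
  | cons x xs ih =>
    obtain ⟨IH1, IH2⟩ := ih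
    exact ⟨stepC hc rfl IH1 IH2 rfl, stepE hc rfl IH1 IH2 rfl⟩


lemma getLastD_ne_zero {l : List ℝ} {x : ℝ} (hx : x ≠ 0) (hl : ∀ z ∈ l, z ≠ 0) :
    l.getLastD x ≠ 0 := by
  have := List.getLastD_mem_cons (l := l) (a := x)
  rcases List.mem_cons.1 this with h | h
  · rw [h]; exact hx
  · exact hl _ h

lemma sc2_even_iff : ∀ (l : List ℝ) (x : ℝ), x ≠ 0 → (∀ z ∈ l, z ≠ 0) →
    (Even (sc2 (x :: l)) ↔ 0 < x * l.getLastD x) := by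
  intro l
  induction l with
  | nil =>
    intro x hx _
    simp [sc2, mul_self_pos.2 hx]
  | cons y t ih =>
    intro x hx hl
    have hy : y ≠ 0 := hl y (by simp)
    have ht : ∀ z ∈ t, z ≠ 0 := fun z hz => hl z (by simp [hz])
    have hL : t.getLastD y ≠ 0 := getLastD_ne_zero hy ht
    have hrec : sc2 (x :: y :: t) = (if x * y < 0 then 1 else 0) + sc2 (y :: t) := rfl
    have hIH := ih y hy ht
    rw [List.getLastD_cons, hrec]
    rcases lt_trichotomy (x * y) 0 with hxy | hxy | hxy
    · rw [if_pos hxy]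
      rw [show (1 : ℕ) + sc2 (y :: t) = sc2 (y :: t) + 1 by omega, Nat.even_add_one, hIH]
      constructor
      · intro h
        have h2 : y * t.getLastD y < 0 :=
          lt_of_le_of_ne (not_lt.1 h) (mul_ne_zero hy hL)
        nlinarith [mul_self_pos.2 hy]
      · intro h h2
        nlinarith [mul_self_pos.2 hL]
    · exact absurd hxy (mul_ne_zero hx hy)
    · rw [if_neg (not_lt_of_gt hxy), zero_add, hIH]
      constructor
      · intro h; nlinarith [mul_self_pos.2 hy]
      · intro h; nlinarith [mul_self_pos.2 hx]

lemma Vc_append_zeros {l₂ : List ℝ} (l₁ : List ℝ) (h : ∀ x ∈ l₂, x = 0) :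
    Vc (l₁ ++ l₂) = Vc l₁ := by
  rw [Vc, Vc, List.filter_append]
  have : l₂.filter (fun a => decide (a ≠ 0)) = [] := by
    rw [List.filter_eq_nil_iff]; intro a ha; simpa using h a ha
  rw [this, List.append_nil]

/-! ### Polynomial bridges -/

noncomputable def ofL : List ℝ → Polynomial ℝ
  | [] => 0
  | x :: xs => Polynomial.C x + Polynomial.X * ofL xs

lemma coeff_ofL : ∀ (l : List ℝ) (i : ℕ), (ofL l).coeff i = l.getD i 0 := by
  intro l
  induction l with
  | nil => intro i; simp [ofL]
  | cons x xs ih =>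
    intro i
    rw [ofL]
    cases i with
    | zero => simp
    | succ j => simp [Polynomial.coeff_X_mul, ih]

lemma ofL_eq_zero {l : List ℝ} (h : ∀ x ∈ l, x = 0) : ofL l = 0 := by
  induction l with
  | nil => rfl
  | cons x xs ih =>
    rw [ofL, h x (by simp), ih (fun y hy => h y (by simp [hy]))]
    simp

noncomputable def lcoeff (p : Polynomial ℝ) : List ℝ :=
  (List.range (p.natDegree + 1)).map p.coeff

noncomputable def V (p : Polynomial ℝ) : ℕ := Vc (lcoeff p)

lemma ofL_lcoeff (p : Polynomial ℝ) : ofL (lcoeff p) = p := by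
  ext i
  rw [coeff_ofL, lcoeff]
  rcases lt_or_ge i (p.natDegree + 1) with h | h
  · rw [List.getD_eq_getElem _ _ (by simpa using h)]
    simp
  · rw [List.getD_eq_default _ _ (by simpa using h)]
    exact (Polynomial.coeff_eq_zero_of_natDegree_lt (by omega)).symm

lemma map_range_getD (l : List ℝ) (m : ℕ) (h : m ≤ l.length) :
    (List.range m).map (fun i => l.getD i 0) = l.take m := by
  apply List.ext_getElem
  · simpa using h
  · intro i h1 h2
    have hi : i < l.length := by simp at h1; omega
    simp only [List.getElem_map, List.getElem_range, List.getElem_take,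
      List.getD_eq_getElem _ _ hi]

lemma Vc_lcoeff_ofL {l : List ℝ} (h : ofL l ≠ 0) : Vc (lcoeff (ofL l)) = Vc l := by
  have hlen : (ofL l).natDegree + 1 ≤ l.length := by
    by_contra hcon
    push_neg at hcon
    have : (ofL l).coeff (ofL l).natDegree = 0 := by
      rw [coeff_ofL, List.getD_eq_default _ _ (by omega)]
    exact Polynomial.leadingCoeff_ne_zero.2 h this
  have h1 : lcoeff (ofL l) = l.take ((ofL l).natDegree + 1) := by
    rw [lcoeff]
    rw [show (List.range ((ofL l).natDegree + 1)).map (ofL l).coeff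
        = (List.range ((ofL l).natDegree + 1)).map (fun i => l.getD i 0) from
      List.map_congr_left (fun i _ => coeff_ofL l i)]
    exact map_range_getD l _ hlen
  have h2 : ∀ x ∈ l.drop ((ofL l).natDegree + 1), x = 0 := by
    intro x hx
    obtain ⟨i, hi, rfl⟩ := List.getElem_of_mem hx
    rw [List.getElem_drop]
    have : (ofL l).coeff ((ofL l).natDegree + 1 + i) = l.getD ((ofL l).natDegree + 1 + i) 0 :=
      coeff_ofL l _
    rw [List.getD_eq_getElem _ _ (by simp at hi ⊢; omega)] at this
    rw [← this]
    exact Polynomial.coeff_eq_zero_of_natDegree_lt (by omega)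
  conv_rhs => rw [← List.take_append_drop ((ofL l).natDegree + 1) l]
  rw [h1, Vc_append_zeros _ h2]


/-! ### multiplication by (X - c) -/

noncomputable def mulL (c : ℝ) : ℝ → List ℝ → List ℝ
  | prev, [] => [prev]
  | prev, x :: xs => (prev - c * x) :: mulL c x xs

lemma T_mulL (c : ℝ) : ∀ (l : List ℝ) (prev : ℝ), T c (mulL c prev l) = prev := by
  intro l
  induction l with
  | nil => intro prev; rw [mulL, T, T]; ring
  | cons x xs ih => intro prev; rw [mulL, T, ih]; ring

lemma S_mulL (c : ℝ) : ∀ (l : List ℝ) (prev : ℝ), S c (mulL c prev l) = l ++ [0] := by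
  intro l
  induction l with
  | nil => intro prev; rw [mulL, S, S, T]; rfl
  | cons x xs ih => intro prev; rw [mulL, S, ih, T_mulL]; rfl

lemma ofL_mulL (c : ℝ) : ∀ (l : List ℝ) (prev : ℝ),
    ofL (mulL c prev l) = C prev + (X - C c) * ofL l := by
  intro l
  induction l with
  | nil => intro prev; rw [mulL, ofL, ofL, ofL]; ring
  | cons x xs ih =>
    intro prev
    rw [mulL, ofL, ih, ofL]
    rw [map_sub, map_mul]
    ring

lemma V_step {c : ℝ} (hc : 0 < c) {p : Polynomial ℝ} (hp : p ≠ 0) :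
    V p + 1 ≤ V ((X - C c) * p) := by
  set b := mulL c 0 (lcoeff p) with hb
  have hofb : ofL b = (X - C c) * p := by
    rw [hb, ofL_mulL, ofL_lcoeff]; simp
  have hXc : (X - C c : Polynomial ℝ) ≠ 0 := Polynomial.X_sub_C_ne_zero c
  have hbne : ofL b ≠ 0 := by rw [hofb]; exact mul_ne_zero hXc hp
  have h1 : V ((X - C c) * p) = Vc b := by
    rw [V, ← hofb, Vc_lcoeff_ofL hbne]
  obtain ⟨z, hz⟩ : ∃ z, fn b = some z := by
    cases hfn : fn b with
    | none => exact absurd (ofL_eq_zero ((fn_eq_none_iff b).1 hfn)) hbne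
    | some z => exact ⟨z, rfl⟩
  have hT0 : T c b = 0 := by rw [hb]; exact T_mulL c _ 0
  have hS0 : S c b = lcoeff p ++ [0] := by rw [hb]; exact S_mulL c _ 0
  have hE := (CE hc b).2 z hz (Or.inl hT0)
  rw [hT0, hS0, Vc_cons_zero, Vc_append_zeros _ (by simp)] at hE
  rw [h1, V]
  omega

/-! ### head and last of the filtered coefficient list -/

lemma getLast?_eq_getLastD {α : Type*} : ∀ (l : List α) (a : α),
    (a :: l).getLast? = some (l.getLastD a) := by
  intro l
  induction l with
  | nil => intro a; rfl
  | cons b t ih => intro a; rw [List.getLast?_cons_cons, ih, List.getLastD_cons]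

lemma lcoeff_filter_last {p : Polynomial ℝ} (hp : p ≠ 0) :
    ((lcoeff p).filter (fun a => decide (a ≠ 0))).getLast? = some p.leadingCoeff := by
  rw [lcoeff, List.range_succ, List.map_append, List.filter_append]
  have hl : p.coeff p.natDegree ≠ 0 := by
    rw [← Polynomial.leadingCoeff]
    exact Polynomial.leadingCoeff_ne_zero.2 hp
  have : ([p.natDegree].map p.coeff).filter (fun a => decide (a ≠ 0)) = [p.leadingCoeff] := by
    rw [List.map_cons, List.map_nil, List.filter_cons, if_pos (by simpa using hl)]
    rfl
  rw [this, List.getLast?_concat]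

lemma lcoeff_filter_head {p : Polynomial ℝ} (hp : p ≠ 0) :
    ((lcoeff p).filter (fun a => decide (a ≠ 0))).head? = some p.trailingCoeff := by
  have hk : p.natTrailingDegree ≤ p.natDegree := Polynomial.natTrailingDegree_le_natDegree p
  have hsplit : List.range (p.natDegree + 1)
      = List.range' 0 p.natTrailingDegree ++ List.range' p.natTrailingDegree
        (p.natDegree + 1 - p.natTrailingDegree) := by
    obtain ⟨m, hm⟩ : ∃ m, p.natDegree + 1 - p.natTrailingDegree = m := ⟨_, rfl⟩
    rw [hm, List.range_eq_range',
      show p.natDegree + 1 = p.natTrailingDegree + m from by omega,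
      ← List.range'_append_1, Nat.zero_add]
  rw [lcoeff, hsplit, List.map_append, List.filter_append]
  have h1 : ((List.range' 0 p.natTrailingDegree).map p.coeff).filter
      (fun a => decide (a ≠ 0)) = [] := by
    rw [List.filter_eq_nil_iff]
    intro a ha
    simp only [List.mem_map] at ha
    obtain ⟨i, hi, rfl⟩ := ha
    have : i < p.natTrailingDegree := by
      rw [List.mem_range'] at hi
      omega
    simp [Polynomial.coeff_eq_zero_of_lt_natTrailingDegree this]
  have h2 : p.natDegree + 1 - p.natTrailingDegree = (p.natDegree - p.natTrailingDegree) + 1 := by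
    omega
  rw [h1, h2, List.range'_succ, List.nil_append, List.map_cons, List.filter_cons]
  have h3 : p.coeff p.natTrailingDegree ≠ 0 :=
    Polynomial.coeff_natTrailingDegree_ne_zero.2 hp
  rw [if_pos (by simpa using h3)]
  rfl

lemma mem_filter_ne_zero {l : List ℝ} : ∀ x ∈ l.filter (fun a => decide (a ≠ 0)), x ≠ 0 := by
  intro x hx
  have := List.of_mem_filter hx
  simpa using this

lemma even_V_iff {p : Polynomial ℝ} (hp : p ≠ 0) :
    Even (V p) ↔ 0 < p.trailingCoeff * p.leadingCoeff := by
  cases hfl : (lcoeff p).filter (fun a => decide (a ≠ 0)) with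
  | nil =>
    have := lcoeff_filter_head hp
    rw [hfl] at this
    simp at this
  | cons x l' =>
    have hhead := lcoeff_filter_head hp
    rw [hfl] at hhead
    simp only [List.head?_cons, Option.some.injEq] at hhead
    have hlast := lcoeff_filter_last hp
    rw [hfl, getLast?_eq_getLastD] at hlast
    simp only [Option.some.injEq] at hlast
    have hnz : ∀ z ∈ x :: l', z ≠ 0 := by rw [← hfl]; exact mem_filter_ne_zero
    have hVp : V p = sc2 (x :: l') := by rw [V, Vc, hfl]
    rw [hVp, sc2_even_iff l' x (hnz x (by simp)) (fun z hz => hnz z (by simp [hz]))]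
    rw [hlast, hhead]

lemma trailingCoeff_X_sub_C {c : ℝ} (hc : c ≠ 0) :
    (X - C c : Polynomial ℝ).trailingCoeff = -c := by
  have h0 : (X - C c : Polynomial ℝ).coeff 0 = -c := by simp
  have : (X - C c : Polynomial ℝ).natTrailingDegree = 0 := by
    rw [Polynomial.natTrailingDegree_eq_zero]
    right
    rw [h0]
    simpa using hc
  rw [Polynomial.trailingCoeff, this, h0]

lemma even_V_mul {c : ℝ} (hc : 0 < c) {p : Polynomial ℝ} (hp : p ≠ 0) :
    Even (V ((X - C c) * p)) ↔ ¬ Even (V p) := by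
  have hXc : (X - C c : Polynomial ℝ) ≠ 0 := Polynomial.X_sub_C_ne_zero c
  have hq : (X - C c) * p ≠ 0 := mul_ne_zero hXc hp
  rw [even_V_iff hq, even_V_iff hp]
  rw [Polynomial.trailingCoeff_mul, Polynomial.leadingCoeff_mul,
    trailingCoeff_X_sub_C (ne_of_gt hc), (Polynomial.monic_X_sub_C c).leadingCoeff]
  have ht : p.trailingCoeff ≠ 0 := Polynomial.trailingCoeff_nonzero_iff_nonzero.2 hp
  have hL : p.leadingCoeff ≠ 0 := Polynomial.leadingCoeff_ne_zero.2 hp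
  have htL : p.trailingCoeff * p.leadingCoeff ≠ 0 := mul_ne_zero ht hL
  constructor
  · intro h h2
    nlinarith
  · intro h
    have h2 : p.trailingCoeff * p.leadingCoeff < 0 :=
      lt_of_le_of_ne (not_lt.1 h) htL
    nlinarith


/-! ### polynomials with no positive roots have an even sign change count -/

lemma X_pow_mul_divX_iter : ∀ (k : ℕ) (p : Polynomial ℝ), (∀ i, i < k → p.coeff i = 0) →
    X ^ k * (Polynomial.divX)^[k] p = p := by
  intro k
  induction k with
  | zero => intro p _; simp
  | succ k ih =>
    intro p h
    have h0 : p.coeff 0 = 0 := h 0 (by omega)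
    have hp : X * p.divX = p := by
      conv_rhs => rw [← Polynomial.X_mul_divX_add p]
      rw [h0, map_zero, add_zero]
    have hdiv : ∀ i, i < k → p.divX.coeff i = 0 := fun i hi => by
      rw [Polynomial.coeff_divX]; exact h (i + 1) (by omega)
    calc X ^ (k+1) * (Polynomial.divX)^[k+1] p
        = X * (X ^ k * (Polynomial.divX)^[k] p.divX) := by
          rw [Function.iterate_succ_apply]; ring
      _ = X * p.divX := by rw [ih _ hdiv]
      _ = p := hp

lemma coeff_divX_iter : ∀ (k : ℕ) (p : Polynomial ℝ) (i : ℕ),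
    ((Polynomial.divX)^[k] p).coeff i = p.coeff (i + k) := by
  intro k
  induction k with
  | zero => intro p i; simp
  | succ k ih =>
    intro p i
    rw [Function.iterate_succ_apply, ih, Polynomial.coeff_divX]
    congr 1

lemma no_pos_roots_sign {p : Polynomial ℝ} (hp : p ≠ 0)
    (h : ∀ x : ℝ, 0 < x → p.eval x ≠ 0) : 0 < p.trailingCoeff * p.leadingCoeff := by
  set k := p.natTrailingDegree with hk
  set q := (Polynomial.divX)^[k] p with hq
  have hfac : X ^ k * q = p :=
    X_pow_mul_divX_iter k p (fun i hi => Polynomial.coeff_eq_zero_of_lt_natTrailingDegree hi)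
  have hq0 : q.coeff 0 = p.trailingCoeff := by
    rw [hq, coeff_divX_iter, Polynomial.trailingCoeff, zero_add]
  have hqne : q ≠ 0 := by
    intro h0; rw [h0, mul_zero] at hfac; exact hp hfac.symm
  have hq0ne : q.coeff 0 ≠ 0 := by
    rw [hq0]; exact Polynomial.trailingCoeff_nonzero_iff_nonzero.2 hp
  have heval : ∀ x : ℝ, x ^ k * q.eval x = p.eval x := by
    intro x
    rw [← hfac]
    simp
  have hqroots : ∀ x : ℝ, 0 < x → q.eval x ≠ 0 := by
    intro x hx hx0
    apply h x hx
    rw [← heval, hx0, mul_zero]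
  have hlead : q.leadingCoeff = p.leadingCoeff := by
    rw [← hfac, Polynomial.leadingCoeff_mul, (Polynomial.monic_X_pow k).leadingCoeff, one_mul]
  rw [← hq0, ← hlead]
  rcases Nat.eq_zero_or_pos q.natDegree with hdeg | hdeg
  · have : q.leadingCoeff = q.coeff 0 := by
      rw [Polynomial.leadingCoeff, hdeg]
    rw [this]
    exact mul_self_pos.2 hq0ne
  · have hdeg' : 0 < q.degree := Polynomial.natDegree_pos_iff_degree_pos.1 hdeg
    have hLne : q.leadingCoeff ≠ 0 := Polynomial.leadingCoeff_ne_zero.2 hqne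
    have he0 : q.eval 0 = q.coeff 0 := (Polynomial.coeff_zero_eq_eval_zero q).symm
    rcases lt_trichotomy (q.coeff 0) 0 with h0 | h0 | h0
    · -- coeff 0 < 0 : show leadingCoeff < 0
      rcases lt_trichotomy q.leadingCoeff 0 with hL | hL | hL
      · exact mul_pos_of_neg_of_neg h0 hL
      · exact absurd hL hLne
      · exfalso
        have htt := Polynomial.tendsto_atTop_of_leadingCoeff_nonneg q hdeg' hL.le
        obtain ⟨x₀, hx1, hx2⟩ :=
          ((htt.eventually_ge_atTop 1).and (Filter.eventually_ge_atTop (1:ℝ))).exists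
        have hmem : (0:ℝ) ∈ Set.Ioo (q.eval 0) (q.eval x₀) := by
          constructor
          · rw [he0]; exact h0
          · linarith
        obtain ⟨c, hc, hceval⟩ := intermediate_value_Ioo (by linarith : (0:ℝ) ≤ x₀)
          (q.continuous.continuousOn) hmem
        exact hqroots c hc.1 hceval
    · exact absurd h0 hq0ne
    · -- coeff 0 > 0 : show leadingCoeff > 0
      rcases lt_trichotomy q.leadingCoeff 0 with hL | hL | hL
      · exfalso
        have htb := Polynomial.tendsto_atBot_of_leadingCoeff_nonpos q hdeg' hL.le
        obtain ⟨x₀, hx1, hx2⟩ :=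
          ((htb.eventually_le_atBot (-1)).and (Filter.eventually_ge_atTop (1:ℝ))).exists
        have hmem : (0:ℝ) ∈ Set.Ioo (q.eval x₀) (q.eval 0) := by
          constructor
          · linarith
          · rw [he0]; exact h0
        obtain ⟨c, hc, hceval⟩ := intermediate_value_Ioo' (by linarith : (0:ℝ) ≤ x₀)
          (q.continuous.continuousOn) hmem
        exact hqroots c hc.1 hceval
      · exact absurd hL hLne
      · exact mul_pos h0 hL

/-! ### iterated root removal -/

lemma iterV : ∀ (s : Multiset ℝ), (∀ a ∈ s, 0 < a) → ∀ (h : Polynomial ℝ), h ≠ 0 →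
    (Multiset.card s + V h ≤ V ((s.map (fun a => X - C a)).prod * h) ∧
     (Even (V ((s.map (fun a => X - C a)).prod * h)) ↔ Even (Multiset.card s + V h))) := by
  intro s
  induction s using Multiset.induction_on with
  | empty => intro _ h hh; simp
  | cons a s ih =>
    intro hpos h hh
    have hposs : ∀ b ∈ s, 0 < b := fun b hb => hpos b (Multiset.mem_cons_of_mem hb)
    have ha : 0 < a := hpos a (Multiset.mem_cons_self a s)
    have hmonic : ((s.map (fun a => X - C a)).prod).Monic :=
      Polynomial.monic_multiset_prod_of_monic _ _ (fun b _ => Polynomial.monic_X_sub_C b)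
    have hprods : (s.map (fun a => X - C a)).prod ≠ 0 := hmonic.ne_zero
    have hph : (s.map (fun a => X - C a)).prod * h ≠ 0 := mul_ne_zero hprods hh
    obtain ⟨IH1, IH2⟩ := ih hposs h hh
    have hstep := V_step ha hph
    have hflip := even_V_mul ha hph
    simp only [Multiset.map_cons, Multiset.prod_cons, mul_assoc]
    constructor
    · rw [Multiset.card_cons]
      omega
    · rw [Multiset.card_cons,
        show Multiset.card s + 1 + V h = (Multiset.card s + V h) + 1 from by omega,
        Nat.even_add_one]
      exact hflip.trans (not_congr IH2)

lemma main1 (f : Polynomial ℝ) (hf : f ≠ 0) :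
    ∃ r, V f = Multiset.card (f.roots.filter (fun a => 0 < a)) + 2 * r := by
  set P := f.roots.filter (fun a => 0 < a) with hP
  have hPle : P ≤ f.roots := Multiset.filter_le _ _
  have hdvd : (P.map fun a => X - C a).prod ∣ f :=
    (Multiset.prod_dvd_prod_of_le (Multiset.map_le_map hPle)).trans
      (Polynomial.prod_multiset_X_sub_C_dvd f)
  obtain ⟨h, hfh⟩ := hdvd
  have hh : h ≠ 0 := by
    rintro rfl
    rw [mul_zero] at hfh
    exact hf hfh
  have hposP : ∀ a ∈ P, 0 < a := fun a ha => Multiset.of_mem_filter (hP ▸ ha)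
  have hroots : f.roots = P + h.roots := by
    rw [hfh, Polynomial.roots_mul (hfh ▸ hf), Polynomial.roots_multiset_prod_X_sub_C]
  have hnoPos : ∀ x : ℝ, 0 < x → h.eval x ≠ 0 := by
    intro x hx hx0
    have hxr : x ∈ h.roots := Polynomial.mem_roots'.2 ⟨hh, hx0⟩
    have heq : P = Multiset.filter (fun a => 0 < a) P + Multiset.filter (fun a => 0 < a) h.roots := by
      conv_lhs => rw [hP, hroots, Multiset.filter_add]
    rw [Multiset.filter_eq_self.2 hposP] at heq
    have h0 : Multiset.filter (fun a => 0 < a) h.roots = 0 := by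
      have hc := congrArg Multiset.card heq
      rw [Multiset.card_add] at hc
      rw [← Multiset.card_eq_zero]
      omega
    have : x ∈ Multiset.filter (fun a => 0 < a) h.roots := Multiset.mem_filter.2 ⟨hxr, hx⟩
    rw [h0] at this
    simp at this
  obtain ⟨IH1, IH2⟩ := iterV P hposP h hh
  have hEvenh : Even (V h) := (even_V_iff hh).2 (no_pos_roots_sign hh hnoPos)
  rw [← hfh] at IH1 IH2
  obtain ⟨sh, hsh⟩ := hEvenh
  have h2 : V f % 2 = (Multiset.card P + V h) % 2 := by
    rw [Nat.even_iff, Nat.even_iff] at IH2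
    omega
  exact ⟨(V f - Multiset.card P) / 2, by omega⟩


/-! ### composition with -X -/

lemma comp_neg_X_invol (p : Polynomial ℝ) : (p.comp (-X)).comp (-X) = p := by
  rw [Polynomial.comp_assoc]
  simp

lemma comp_neg_X_ne_zero {p : Polynomial ℝ} (hp : p ≠ 0) : p.comp (-X) ≠ 0 := by
  intro h
  have := congrArg (fun q => Polynomial.comp q (-X)) h
  simp only [Polynomial.zero_comp] at this
  rw [comp_neg_X_invol] at this
  exact hp this

lemma natDegree_comp_neg_X (p : Polynomial ℝ) : (p.comp (-X)).natDegree = p.natDegree := by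
  rw [Polynomial.natDegree_comp]
  simp

lemma coeff_comp_neg_X (p : Polynomial ℝ) (i : ℕ) :
    (p.comp (-X)).coeff i = (-1) ^ i * p.coeff i := by
  induction p using Polynomial.induction_on' with
  | add p q hp hq =>
    rw [Polynomial.add_comp, Polynomial.coeff_add, hp, hq, Polynomial.coeff_add]
    ring
  | monomial n a =>
    rw [Polynomial.monomial_comp]
    have h1 : (-X : Polynomial ℝ) ^ n = C ((-1)^n) * X ^ n := by
      rw [neg_pow]
      congr 1
      rw [map_pow, map_neg, map_one]
    rw [h1, ← mul_assoc, ← map_mul, Polynomial.coeff_C_mul, Polynomial.coeff_X_pow,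
      Polynomial.coeff_monomial]
    rcases eq_or_ne n i with rfl | hne
    · simp [mul_comm]
    · simp [hne, Ne.symm hne]

lemma comp_dvd {u v : Polynomial ℝ} (h : u ∣ v) : u.comp (-X) ∣ v.comp (-X) := by
  obtain ⟨s, rfl⟩ := h
  rw [Polynomial.mul_comp]
  exact Dvd.intro _ rfl

lemma pow_dvd_comp {q : Polynomial ℝ} {b : ℝ} {n : ℕ} (h : (X - C b) ^ n ∣ q) :
    (X - C (-b)) ^ n ∣ q.comp (-X) := by
  have h2 := comp_dvd h
  rw [Polynomial.pow_comp, Polynomial.sub_comp, Polynomial.X_comp, Polynomial.C_comp] at h2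
  have h3 : (-X - C b : Polynomial ℝ) = -(X - C (-b)) := by
    rw [map_neg]
    ring
  rw [h3, neg_pow] at h2
  exact dvd_trans (dvd_mul_left _ _) h2

lemma rootMultiplicity_comp_neg_X {p : Polynomial ℝ} (hp : p ≠ 0) (a : ℝ) :
    Polynomial.rootMultiplicity a (p.comp (-X)) = Polynomial.rootMultiplicity (-a) p := by
  have hcomp : p.comp (-X) ≠ 0 := comp_neg_X_ne_zero hp
  apply le_antisymm
  · have hd := pow_dvd_comp (Polynomial.pow_rootMultiplicity_dvd (p.comp (-X)) a)
    rw [comp_neg_X_invol] at hd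
    exact (Polynomial.le_rootMultiplicity_iff hp).2 hd
  · have hd := pow_dvd_comp (Polynomial.pow_rootMultiplicity_dvd p (-a))
    rw [neg_neg] at hd
    exact (Polynomial.le_rootMultiplicity_iff hcomp).2 hd

lemma roots_comp_neg_X {p : Polynomial ℝ} (hp : p ≠ 0) :
    (p.comp (-X)).roots = p.roots.map (fun a => -a) := by
  classical
  ext b
  rw [Polynomial.count_roots, rootMultiplicity_comp_neg_X hp]
  have : b = -(-b) := by ring
  rw [this]
  rw [Multiset.count_map_eq_count' _ _ neg_injective]
  rw [Polynomial.count_roots]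
  congr 1
  ring


/-! ### the sum bound V₊ + V₋ ≤ n - k -/

lemma chainSum (g : ℕ → ℝ) : ∀ (L : List ℕ) (p : ℕ), (p :: L).Pairwise (· < ·) →
    (∀ i ∈ p :: L, g i ≠ 0) →
    sc2 ((p :: L).map g) + sc2 ((p :: L).map (fun i => (-1)^i * g i)) + p ≤ L.getLastD p := by
  intro L
  induction L with
  | nil => intro p _ _; simp [sc2]
  | cons q t ih =>
    intro p hpair hnz
    have hpq : p < q := (List.pairwise_cons.1 hpair).1 q (by simp)
    have hpair' : (q :: t).Pairwise (· < ·) := (List.pairwise_cons.1 hpair).2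
    have hnz' : ∀ i ∈ q :: t, g i ≠ 0 := fun i hi => hnz i (by simp [hi])
    have IH := ih q hpair' hnz'
    have hgp : g p ≠ 0 := hnz p (by simp)
    have hgq : g q ≠ 0 := hnz q (by simp)
    have e1 : sc2 ((p::q::t).map g) = (if g p * g q < 0 then 1 else 0) + sc2 ((q::t).map g) := rfl
    have e2 : sc2 ((p::q::t).map (fun i => (-1)^i * g i))
        = (if ((-1)^p * g p) * ((-1)^q * g q) < 0 then 1 else 0)
          + sc2 ((q::t).map (fun i => (-1)^i * g i)) := rfl
    rw [List.getLastD_cons, e1, e2]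
    have key : (if g p * g q < 0 then 1 else 0) +
        (if ((-1:ℝ)^p * g p) * ((-1)^q * g q) < 0 then 1 else 0) + p ≤ q := by
      rcases Nat.even_or_odd (p + q) with hpar | hpar
      · have hone : (-1:ℝ)^p * (-1)^q = 1 := by
          rw [← pow_add]; exact Even.neg_one_pow hpar
        have hsign : ((-1:ℝ)^p * g p) * ((-1)^q * g q) = g p * g q := by
          rw [show ((-1:ℝ)^p * g p) * ((-1)^q * g q)
              = ((-1:ℝ)^p * (-1)^q) * (g p * g q) from by ring, hone, one_mul]
        rw [hsign]
        split
        · have := Nat.even_iff.1 hpar; omega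
        · omega
      · have hone : (-1:ℝ)^p * (-1)^q = -1 := by
          rw [← pow_add]; exact Odd.neg_one_pow hpar
        have hsign : ((-1:ℝ)^p * g p) * ((-1)^q * g q) = -(g p * g q) := by
          rw [show ((-1:ℝ)^p * g p) * ((-1)^q * g q)
              = ((-1:ℝ)^p * (-1)^q) * (g p * g q) from by ring, hone]
          ring
        rw [hsign]
        rcases lt_trichotomy (g p * g q) 0 with h | h | h
        · rw [if_pos h, if_neg (by linarith)]; omega
        · exact absurd h (mul_ne_zero hgp hgq)
        · rw [if_neg (not_lt_of_gt h), if_pos (by linarith)]; omega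
    omega

lemma sumV {m k n : ℕ} (g : ℕ → ℝ) (hkn : k ≤ n) (hnm : n < m)
    (hlow : ∀ i, i < k → g i = 0) (hhigh : ∀ i, n < i → g i = 0)
    (hk : g k ≠ 0) (hn : g n ≠ 0) :
    Vc ((List.range m).map g) + Vc ((List.range m).map (fun i => (-1)^i * g i)) ≤ n - k := by
  set J := (List.range m).filter (fun i => decide (g i ≠ 0)) with hJ
  have h1 : Vc ((List.range m).map g) = sc2 (J.map g) := by
    rw [Vc, List.filter_map]
    rfl
  have h2 : Vc ((List.range m).map fun i => (-1)^i * g i)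
      = sc2 (J.map fun i => (-1)^i * g i) := by
    rw [Vc, List.filter_map]
    congr 2
    apply List.filter_congr
    intro i _
    simp only [Function.comp]
    rw [decide_eq_decide]
    constructor
    · intro h hgi; exact h (by rw [hgi, mul_zero])
    · intro h hmul
      rcases mul_eq_zero.1 hmul with h' | h'
      · exact absurd h' (by positivity)
      · exact h h'
  have hpairJ : J.Pairwise (· < ·) := by
    apply List.Pairwise.sublist List.filter_sublist
    rw [List.range_eq_range']
    exact List.pairwise_lt_range' (s := 0) (n := m)
  have hmemJ : ∀ i ∈ J, g i ≠ 0 := by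
    intro i hi
    have := List.of_mem_filter hi
    simpa using this
  have hhead : J.head? = some k := by
    rw [hJ]
    obtain ⟨w, hw⟩ : ∃ w, m - k = w + 1 := ⟨m - k - 1, by omega⟩
    rw [List.range_eq_range',
      show m = k + (m - k) from by omega, ← List.range'_append_1,
      Nat.zero_add, List.filter_append, hw, List.range'_succ]
    have hemp : (List.range' 0 k).filter (fun i => decide (g i ≠ 0)) = [] := by
      rw [List.filter_eq_nil_iff]
      intro i hi
      rw [List.mem_range'] at hi
      obtain ⟨j, hj, rfl⟩ := hi
      have hz : g (0 + 1 * j) = 0 := hlow _ (by omega)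
      simpa using hz
    rw [hemp, List.filter_cons, if_pos (by simpa using hk)]
    rfl
  have hlast : J.getLast? = some n := by
    rw [hJ]
    rw [List.range_eq_range',
      show m = (n+1) + (m - n - 1) from by omega,
      ← List.range'_append_1, Nat.zero_add, List.filter_append]
    have hemp : (List.range' (n+1) (m-n-1)).filter (fun i => decide (g i ≠ 0)) = [] := by
      rw [List.filter_eq_nil_iff]
      intro i hi
      rw [List.mem_range'] at hi
      obtain ⟨j, hj, rfl⟩ := hi
      have hz : g (n + 1 + 1 * j) = 0 := hhigh _ (by omega)
      simpa using hz
    rw [hemp, List.append_nil, ← List.range_eq_range', List.range_succ, List.filter_append]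
    rw [List.filter_cons, if_pos (by simpa using hn)]
    exact List.getLast?_concat
  rw [h1, h2]
  cases hJc : J with
  | nil => rw [hJc] at hhead; simp at hhead
  | cons p L =>
    rw [hJc] at hhead hlast hpairJ hmemJ
    rw [List.head?_cons, Option.some.injEq] at hhead
    rw [getLast?_eq_getLastD, Option.some.injEq] at hlast
    have hchain := chainSum g L p hpairJ hmemJ
    rw [hlast] at hchain
    omega

/-! ### counting roots by sign -/

lemma count_zero_roots {f : Polynomial ℝ} (hf : f ≠ 0) :
    f.roots.count 0 = f.natTrailingDegree := by
  classical
  rw [Polynomial.count_roots]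
  apply le_antisymm
  · have hd := Polynomial.pow_rootMultiplicity_dvd f 0
    rw [map_zero, sub_zero, Polynomial.X_pow_dvd_iff] at hd
    by_contra hcon
    push_neg at hcon
    exact Polynomial.coeff_natTrailingDegree_ne_zero.2 hf (hd _ hcon)
  · rw [Polynomial.le_rootMultiplicity_iff hf, map_zero, sub_zero, Polynomial.X_pow_dvd_iff]
    intro d hd
    exact Polynomial.coeff_eq_zero_of_lt_natTrailingDegree hd

lemma card_roots_split (f : Polynomial ℝ) :
    Multiset.card f.roots = Multiset.card (f.roots.filter (fun a => 0 < a))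
      + Multiset.card (f.roots.filter (fun a => a < 0)) + f.roots.count 0 := by
  classical
  rw [Multiset.count_eq_card_filter_eq]
  have h1 := congrArg Multiset.card (Multiset.filter_add_not (fun a => 0 < a) f.roots)
  rw [Multiset.card_add] at h1
  have h2 := congrArg Multiset.card
    (Multiset.filter_add_not (fun a => a < 0) (f.roots.filter (fun a => ¬ 0 < a)))
  rw [Multiset.card_add] at h2
  have e1 : (f.roots.filter (fun a => ¬ 0 < a)).filter (fun a => a < 0)
      = f.roots.filter (fun a => a < 0) := by
    rw [Multiset.filter_filter]
    apply Multiset.filter_congr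
    intro a _
    constructor
    · intro h; exact h.1
    · intro h; exact ⟨h, by linarith⟩
  have e2 : (f.roots.filter (fun a => ¬ 0 < a)).filter (fun a => ¬ a < 0)
      = f.roots.filter (fun a => (0:ℝ) = a) := by
    rw [Multiset.filter_filter]
    apply Multiset.filter_congr
    intro a _
    constructor
    · intro h; linarith [h.1, h.2]
    · intro h; constructor <;> [linarith; linarith]
  rw [e1, e2] at h2
  omega


end DR

lemma signChanges_eq_Vc (l : List ℝ) : signChanges l = DR.Vc l := DR.sc2_eq _

theorem stmt_10 (f : Polynomial ℝ) (hf : f ≠ 0) (n : ℕ) (hn : n = f.natDegree)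
    (Vplus Vminus Nplus Nminus : ℕ)
    (hVp : Vplus = signChanges ((List.range (n + 1)).map fun i => f.coeff i))
    (hVm : Vminus = signChanges ((List.range (n + 1)).map fun i => (-1 : ℝ) ^ i * f.coeff i))
    (hNp : Nplus = (f.roots.filter (fun a => 0 < a)).card)
    (hNm : Nminus = (f.roots.filter (fun a => a < 0)).card) :
    (∃ rp : ℕ, Vplus = Nplus + 2 * rp) ∧
    (∃ rm : ℕ, Vminus = Nminus + 2 * rm) ∧
    (Multiset.card f.roots = n → Nplus = Vplus ∧ Nminus = Vminus) := by
  subst hn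
  have hVp' : Vplus = DR.V f := by
    rw [hVp, signChanges_eq_Vc]
    rfl
  obtain ⟨rp, hrp⟩ := DR.main1 f hf
  have part1 : Vplus = Nplus + 2 * rp := by rw [hVp', hNp, hrp]
  have hgne : f.comp (-X) ≠ 0 := DR.comp_neg_X_ne_zero hf
  have hdeg : (f.comp (-X)).natDegree = f.natDegree := DR.natDegree_comp_neg_X f
  have hVm' : Vminus = DR.V (f.comp (-X)) := by
    rw [hVm, signChanges_eq_Vc, DR.V, DR.lcoeff, hdeg]
    congr 1
    apply List.map_congr_left
    intro i _
    rw [DR.coeff_comp_neg_X]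
  have hroots_g : (f.comp (-X)).roots = f.roots.map (fun a => -a) := DR.roots_comp_neg_X hf
  obtain ⟨rm, hrm⟩ := DR.main1 (f.comp (-X)) hgne
  have hNm' : Nminus = Multiset.card ((f.comp (-X)).roots.filter (fun a => 0 < a)) := by
    rw [hNm, hroots_g, Multiset.filter_map, Multiset.card_map]
    congr 1
    apply Multiset.filter_congr
    intro a _
    simp only [Function.comp]
    exact ⟨fun h => neg_pos.2 h, fun h => neg_pos.1 h⟩
  have part2 : Vminus = Nminus + 2 * rm := by rw [hVm', hNm', hrm]
  refine ⟨⟨rp, part1⟩, ⟨rm, part2⟩, ?_⟩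
  intro hcard
  have hk : f.natTrailingDegree ≤ f.natDegree := Polynomial.natTrailingDegree_le_natDegree f
  have hsplit := DR.card_roots_split f
  have hc0 := DR.count_zero_roots hf
  have htrail : f.coeff f.natTrailingDegree ≠ 0 :=
    Polynomial.coeff_natTrailingDegree_ne_zero.2 hf
  have hlead : f.coeff f.natDegree ≠ 0 := by
    rw [← Polynomial.leadingCoeff]
    exact Polynomial.leadingCoeff_ne_zero.2 hf
  have hsum := DR.sumV (m := f.natDegree + 1) f.coeff hk (Nat.lt_succ_self _)
    (fun i hi => Polynomial.coeff_eq_zero_of_lt_natTrailingDegree hi)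
    (fun i hi => Polynomial.coeff_eq_zero_of_natDegree_lt hi)
    htrail hlead
  have hVp2 : DR.Vc ((List.range (f.natDegree + 1)).map f.coeff) = Vplus := hVp'.symm
  have hVm2 : DR.Vc ((List.range (f.natDegree + 1)).map fun i => (-1 : ℝ)^i * f.coeff i)
      = Vminus := by
    rw [hVm, signChanges_eq_Vc]
  rw [hVp2, hVm2] at hsum
  rw [hNp] at part1 ⊢
  rw [hNm] at part2 ⊢
  omega
end

section
/- Let A be a finite-dimensional commutative algebra over ℝ (or any real closed field K). Then the signature of the trace form Tr_K^A : A × A → K, (f,g) ↦ Tr(λ_{fg}), equals the number of maximal ideals m of A with A/m ≅ K (equivalently, the number of K-algebra homomorphisms A → K). In particular, K is a residue field of A if and only if the signature of the trace form is nonzero. -/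
open Module

section FieldAux
variable (F : Type*) [Field F] [Algebra ℝ F] [FiniteDimensional ℝ F]

lemma aux_rank_of_hom (φ : F →ₐ[ℝ] ℝ) : finrank ℝ F = 1 := by
  have hinj : Function.Injective φ := φ.toRingHom.injective
  have h1 := LinearMap.finrank_le_finrank_of_injective (f := φ.toLinearMap) hinj
  have h2 : finrank ℝ ℝ = 1 := Module.finrank_self ℝ
  have h3 : 0 < finrank ℝ F := Module.finrank_pos
  omega

lemma aux_surj_of_rank1 (h1 : finrank ℝ F = 1) :
    Function.Surjective (algebraMap ℝ F) := by
  intro x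
  have hb : (⊥ : Subalgebra ℝ F) = ⊤ := Subalgebra.bot_eq_top_iff_finrank_eq_one.mpr h1
  have : x ∈ (⊥ : Subalgebra ℝ F) := hb ▸ trivial
  exact Algebra.mem_bot.mp this

lemma aux_hom_subsingleton : Subsingleton (F →ₐ[ℝ] ℝ) := by
  constructor
  intro φ ψ
  have h1 := aux_rank_of_hom F φ
  ext x
  obtain ⟨c, rfl⟩ := aux_surj_of_rank1 F h1 x
  simp

lemma aux_hom_card : Nat.card (F →ₐ[ℝ] ℝ) = if finrank ℝ F = 1 then 1 else 0 := by
  split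
  · next h =>
    rw [Nat.card_eq_one_iff_unique]
    refine ⟨aux_hom_subsingleton F, ?_⟩
    have hbij : Function.Bijective (Algebra.ofId ℝ F) :=
      ⟨(algebraMap ℝ F).injective, aux_surj_of_rank1 F h⟩
    exact ⟨(AlgEquiv.ofBijective (Algebra.ofId ℝ F) hbij).symm.toAlgHom⟩
  · next h =>
    have : IsEmpty (F →ₐ[ℝ] ℝ) := ⟨fun φ => h (aux_rank_of_hom F φ)⟩
    simp [Nat.card_of_isEmpty]

end FieldAux

section FieldAux
variable (F : Type*) [Field F] [Algebra ℝ F] [FiniteDimensional ℝ F]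

lemma aux_surj_of_rank1' (h1 : finrank ℝ F = 1) :
    Function.Surjective (algebraMap ℝ F) := by
  intro x
  have hb : (⊥ : Subalgebra ℝ F) = ⊤ := Subalgebra.bot_eq_top_iff_finrank_eq_one.mpr h1
  have : x ∈ (⊥ : Subalgebra ℝ F) := hb ▸ trivial
  exact Algebra.mem_bot.mp this

lemma aux_field_struct (τ : F →ₗ[ℝ] ℝ) (hτ : 0 < τ 1) :
    ∃ u v : F, 0 < τ (u * u) ∧ τ (v * v) ≤ 0 ∧ τ (u * v) = 0 ∧
      (∀ z : F, ∃ c d : ℝ, z = c • u + d • v) ∧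
      (finrank ℝ F = 1 → v = 0) ∧ (finrank ℝ F ≠ 1 → τ (v * v) < 0) := by
  by_cases h1 : finrank ℝ F = 1
  · refine ⟨1, 0, by simpa using hτ, by simp, by simp, ?_, fun _ => rfl,
      fun h => absurd h1 h⟩
    intro z
    obtain ⟨c, rfl⟩ := aux_surj_of_rank1' F h1 z
    exact ⟨c, 0, by simp [Algebra.algebraMap_eq_smul_one]⟩
  · have halg : Algebra.IsAlgebraic ℝ F := inferInstance
    let f : F →ₐ[ℝ] ℂ := IsAlgClosed.lift
    have hinj : Function.Injective f := f.toRingHom.injective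
    have hle : finrank ℝ F ≤ 2 := by
      have := LinearMap.finrank_le_finrank_of_injective (f := f.toLinearMap) hinj
      rwa [Complex.finrank_real_complex] at this
    have hrank2 : finrank ℝ F = 2 := by
      have h3 : 0 < finrank ℝ F := Module.finrank_pos
      omega
    have hsurj : Function.Surjective f := by
      have h := LinearMap.finrank_range_of_inj (f := f.toLinearMap) hinj
      rw [hrank2, ← Complex.finrank_real_complex] at h
      have := Submodule.eq_top_of_finrank_eq h
      exact LinearMap.range_eq_top.mp this
    let E := AlgEquiv.ofBijective f ⟨hinj, hsurj⟩
    set σ : ℂ →ₗ[ℝ] ℝ := τ ∘ₗ (E.symm.toLinearMap : ℂ →ₗ[ℝ] F) with hσdef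
    have hprod : ∀ z w : ℂ, τ (E.symm z * E.symm w) = σ (z * w) := by
      intro z w
      rw [hσdef]
      simp [← map_mul]
    set α : ℝ := σ 1 with hα
    set β : ℝ := σ Complex.I with hβ
    have hα0 : 0 < α := by
      rw [hα, hσdef]
      simpa using hτ
    set m : ℂ := Complex.mk α (-β) with hm
    have hm0 : m ≠ 0 := fun h => by
      have : α = 0 ∧ β = 0 := by simpa [hm, Complex.ext_iff] using h
      linarith [this.1]
    have hkey : ∀ z : ℂ, σ z = (m * z).re := by
      intro z
      have hz : z = z.re • (1 : ℂ) + z.im • Complex.I := by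
        simp [Complex.real_smul]
      calc σ z = σ (z.re • (1 : ℂ) + z.im • Complex.I) := by rw [← hz]
        _ = z.re * α + z.im * β := by
          rw [map_add, map_smul, map_smul, smul_eq_mul, smul_eq_mul]
        _ = (m * z).re := by rw [Complex.mul_re]; simp [hm]; ring
    have habs : (0 : ℝ) < ‖m‖ := by
      simpa using (norm_pos_iff.mpr hm0)
    obtain ⟨ζ, hζ⟩ := IsAlgClosed.exists_pow_nat_eq
      ((starRingEnd ℂ) m / (‖m‖ : ℂ)) (n := 2) two_pos
    have hζ0 : ζ ≠ 0 := by
      intro h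
      have h2 : (starRingEnd ℂ) m / (‖m‖ : ℂ) = 0 := by
        rw [← hζ, h]; ring
      rw [div_eq_zero_iff] at h2
      rcases h2 with h2 | h2
      · exact hm0 (by simpa using congrArg (starRingEnd ℂ) h2)
      · exact absurd h2 (by simpa using habs.ne')
    have hmζ : m * ζ ^ 2 = (‖m‖ : ℂ) := by
      have hne : (‖m‖ : ℂ) ≠ 0 := by simpa using habs.ne'
      rw [hζ]
      field_simp
      rw [Complex.mul_conj, ← Complex.sq_norm]
      push_cast
      ring
    refine ⟨E.symm ζ, E.symm (ζ * Complex.I), ?_, ?_, ?_, ?_, fun h => absurd h h1,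
      fun _ => ?_⟩
    · rw [hprod, hkey, ← sq, hmζ]
      simpa using habs
    · rw [hprod, hkey]
      have : ζ * Complex.I * (ζ * Complex.I) = - ζ ^ 2 := by
        rw [mul_mul_mul_comm, Complex.I_mul_I]; ring
      rw [this]
      rw [show m * -ζ^2 = -(m * ζ^2) by ring, hmζ]
      simp
    · rw [hprod, hkey]
      rw [show ζ * (ζ * Complex.I) = m⁻¹ * (m * ζ^2) * Complex.I by field_simp]
      rw [hmζ]
      rw [show m * (m⁻¹ * (‖m‖ : ℂ) * Complex.I) = (‖m‖ : ℂ) * Complex.I by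
        field_simp]
      simp
    · intro z
      set ξ := E z with hξ
      refine ⟨(ξ / ζ).re, (ξ / ζ).im, ?_⟩
      have hζeq : (ξ / ζ).re • ζ + (ξ / ζ).im • (ζ * Complex.I) = ξ := by
        rw [Complex.real_smul, Complex.real_smul]
        rw [show (((ξ/ζ).re : ℂ)) * ζ + ((ξ/ζ).im : ℂ) * (ζ * Complex.I)
            = ζ * (((ξ/ζ).re : ℂ) + ((ξ/ζ).im : ℂ) * Complex.I) by ring]
        rw [Complex.re_add_im]
        rw [mul_comm]
        exact div_mul_cancel₀ ξ hζ0
      have := congrArg E.symm hζeq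
      rw [map_add, map_smul, map_smul] at this
      rw [this, hξ]
      simp
    · rw [hprod, hkey]
      have : ζ * Complex.I * (ζ * Complex.I) = - ζ ^ 2 := by
        rw [mul_mul_mul_comm, Complex.I_mul_I]; ring
      rw [this, show m * -ζ^2 = -(m * ζ^2) by ring, hmζ]
      simpa using habs

end FieldAux

section PiAux
variable {ι : Type*} [DecidableEq ι] {M : ι → Type*}

lemma aux_single_mul [∀ i, MulZeroClass (M i)] (i : ι) (x y : M i) :
    (Pi.single i x : ∀ i, M i) * Pi.single i y = Pi.single i (x * y) := by
  funext j
  by_cases h : j = i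
  · subst h; simp
  · simp [Pi.single_eq_of_ne h]

lemma aux_single_mul_ne [∀ i, MulZeroClass (M i)] {i k : ι} (h : i ≠ k)
    (x : M i) (y : M k) : (Pi.single i x : ∀ i, M i) * Pi.single k y = 0 := by
  funext j
  by_cases hj : j = i
  · subst hj
    have : j ≠ k := h
    simp [Pi.single_eq_of_ne this]
  · simp [Pi.single_eq_of_ne hj]

lemma aux_single_smul' [∀ i, AddCommMonoid (M i)] [∀ i, Module ℝ (M i)]
    (i : ι) (r : ℝ) (x : M i) :
    (Pi.single i (r • x) : ∀ i, M i) = r • Pi.single i x := by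
  funext j
  by_cases h : j = i
  · subst h; simp
  · simp [Pi.single_eq_of_ne h]

lemma aux_single_add' [∀ i, AddCommMonoid (M i)] (i : ι) (x y : M i) :
    (Pi.single i (x + y) : ∀ i, M i) = Pi.single i x + Pi.single i y := by
  funext j
  by_cases h : j = i
  · subst h; simp
  · simp [Pi.single_eq_of_ne h]

lemma aux_sum_single [Fintype ι] [∀ i, AddCommMonoid (M i)] (g : ∀ i, M i) :
    ∑ i, (Pi.single i (g i) : ∀ i, M i) = g := by
  funext j
  rw [Finset.sum_apply, Finset.sum_eq_single j (fun l _ hlj => by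
      simp [Pi.single_eq_of_ne (Ne.symm hlj)])
    (fun hj => absurd (Finset.mem_univ j) hj)]
  simp

lemma aux_li {κ : Type*} [Fintype κ] [∀ i, AddCommGroup (M i)] [∀ i, Module ℝ (M i)]
    (f : κ → ι) (hf : Function.Injective f) (w : ∀ k, M (f k)) (hw : ∀ k, w k ≠ 0) :
    LinearIndependent ℝ (fun k => (Pi.single (f k) (w k) : ∀ i, M i)) := by
  rw [Fintype.linearIndependent_iff]
  intro g hg k
  have h := congrFun hg (f k)
  rw [Finset.sum_apply] at h
  rw [Finset.sum_eq_single k (fun l _ hlk => by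
      have hne : f k ≠ f l := fun hh => hlk (hf hh.symm)
      simp [Pi.single_eq_of_ne hne]) (fun hk => absurd (Finset.mem_univ k) hk)] at h
  simp only [Pi.smul_apply, Pi.single_eq_same, Pi.zero_apply] at h
  rcases smul_eq_zero.mp h with h' | h'
  · exact h'
  · exact absurd h' (hw k)

end PiAux

section DecompAux

lemma aux_decomp {V : Type*} [AddCommGroup V] [Module ℝ V]
    (Φ : V →ₗ[ℝ] V →ₗ[ℝ] ℝ) {κ : Type*} [Fintype κ] (fam : κ → V) (N : Submodule ℝ V)
    (hN : ∀ n ∈ N, ∀ x, Φ x n = 0) (hN' : ∀ n ∈ N, ∀ x, Φ n x = 0)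
    (horth : ∀ k l, k ≠ l → Φ (fam k) (fam l) = 0) :
    ∀ x ∈ Submodule.span ℝ (Set.range fam) ⊔ N,
      ∃ c : κ → ℝ, (x - ∑ k, c k • fam k) ∈ N ∧
        Φ x x = ∑ k, c k ^ 2 * Φ (fam k) (fam k) := by
  intro x hx
  obtain ⟨y, hy, n, hn, rfl⟩ := Submodule.mem_sup.mp hx
  obtain ⟨c, rfl⟩ := (Submodule.mem_span_range_iff_exists_fun ℝ).mp hy
  refine ⟨c, by simpa using hn, ?_⟩
  have h1 : Φ (∑ k, c k • fam k + n) (∑ k, c k • fam k + n)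
      = Φ (∑ k, c k • fam k) (∑ k, c k • fam k) := by
    rw [map_add (Φ _), hN n hn, add_zero, map_add Φ, LinearMap.add_apply, hN' n hn, add_zero]
  rw [h1]
  have expand : ∀ zz : V, Φ (∑ k, c k • fam k) zz = ∑ k, c k * Φ (fam k) zz := by
    intro zz
    rw [map_sum Φ, LinearMap.sum_apply]
    exact Finset.sum_congr rfl fun k _ => by
      rw [LinearMap.map_smul, LinearMap.smul_apply, smul_eq_mul]
  rw [expand]
  refine Finset.sum_congr rfl fun k _ => ?_
  rw [map_sum, Finset.sum_eq_single k (fun l _ hlk => by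
      rw [LinearMap.map_smul, horth k l (Ne.symm hlk), smul_zero])
    (fun hk => absurd (Finset.mem_univ k) hk), LinearMap.map_smul, smul_eq_mul]
  ring

end DecompAux

/-- The type `(p, q)` of a symmetric bilinear form on a real vector space, via
Sylvester's law of inertia. -/
def LinearMap.IsTypeOf {V : Type*} [AddCommGroup V] [Module ℝ V]
    (Φ : V →ₗ[ℝ] V →ₗ[ℝ] ℝ) (p q : ℕ) : Prop :=
  IsGreatest {d : ℕ | ∃ W : Submodule ℝ V, Module.finrank ℝ W = d ∧
      ∀ x ∈ W, x ≠ 0 → 0 < Φ x x} p ∧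
  IsGreatest {d : ℕ | ∃ W : Submodule ℝ V, Module.finrank ℝ W = d ∧
      ∀ x ∈ W, x ≠ 0 → Φ x x < 0} q

set_option maxHeartbeats 1600000 in
set_option synthInstance.maxHeartbeats 400000 in
theorem stmt_12 (A : Type*) [CommRing A] [Algebra ℝ A] [FiniteDimensional ℝ A]
    (p q : ℕ) (hT : (Algebra.traceForm ℝ A).IsTypeOf p q) :
    (p : ℤ) - q = Nat.card (A →ₐ[ℝ] ℝ) ∧
    (Nonempty (A →ₐ[ℝ] ℝ) ↔ p ≠ q) := by
  classical
  have hart : IsArtinianRing A := IsArtinianRing.of_finite ℝ A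
  set Φ := Algebra.traceForm ℝ A with hΦdef
  set J := {I : Ideal A | I.IsMaximal} with hJdef
  haveI : Finite J := (IsArtinianRing.setOfPred_isMaximal_finite A).to_subtype
  letI : Fintype J := Fintype.ofFinite J
  haveI hmaxI : ∀ I : J, I.1.IsMaximal := fun I => I.2
  letI instF : ∀ I : J, Field (A ⧸ I.1) := fun I => Ideal.Quotient.field I.1
  haveI instFD : ∀ I : J, FiniteDimensional ℝ (A ⧸ I.1) := fun I =>
    Module.Finite.of_surjective (Ideal.Quotient.mkₐ ℝ I.1).toLinearMap
      (Ideal.Quotient.mkₐ_surjective ℝ I.1)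
  set π : A →ₐ[ℝ] ∀ I : J, A ⧸ I.1 := Pi.algHom _ _ (fun I : J => Ideal.Quotient.mkₐ ℝ I.1)
    with hπdef
  have hπ : ∀ (x : A) (I : J), π x I = Ideal.Quotient.mk I.1 x := fun x I => rfl
  have hco : Pairwise (Function.onFun IsCoprime fun I : J => I.1) := fun I K hne =>
    Ideal.isCoprime_iff_sup_eq.mpr <| (hmaxI I).coprime_of_ne (hmaxI K)
      (fun h => hne (Subtype.ext h))
  have hπs : Function.Surjective π := by
    intro y
    obtain ⟨z, hz⟩ := Ideal.quotientInfToPiQuotient_surj hco y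
    obtain ⟨x, rfl⟩ := Ideal.Quotient.mk_surjective z
    refine ⟨x, ?_⟩
    funext I
    rw [hπ, ← Ideal.quotientInfToPiQuotient_mk']
    exact congrFun hz I
  have hker : ∀ x : A, π x = 0 → IsNilpotent x := by
    intro x hx
    rw [nilpotent_iff_mem_prime]
    intro P hP
    have hPm : P.IsMaximal := (IsArtinianRing.isPrime_iff_isMaximal P).mp hP
    have h2 := congrFun hx ⟨P, hPm⟩
    rw [hπ] at h2
    rw [← Ideal.Quotient.eq_zero_iff_mem]
    exact h2
  have hTr : ∀ x : A, IsNilpotent x → Algebra.trace ℝ A x = 0 := by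
    intro x hx
    have h1 : IsNilpotent (Algebra.lmul ℝ A x) := hx.map (Algebra.lmul ℝ A)
    have h2 := LinearMap.isNilpotent_trace_of_isNilpotent h1
    rw [Algebra.trace_apply]
    exact h2.eq_zero
  have hΦnil : ∀ x n : A, IsNilpotent n → Φ x n = 0 := by
    intro x n hn
    rw [hΦdef, Algebra.traceForm_apply]
    exact hTr _ ((Commute.all x n).isNilpotent_mul_left hn)
  have hΦnil' : ∀ x n : A, IsNilpotent n → Φ n x = 0 := by
    intro x n hn
    rw [hΦdef, Algebra.traceForm_apply, mul_comm]
    exact hTr _ ((Commute.all x n).isNilpotent_mul_left hn)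
  obtain ⟨s, hs0⟩ := π.toLinearMap.exists_rightInverse_of_surjective
    (LinearMap.range_eq_top.mpr hπs)
  have hs : ∀ y, π (s y) = y := fun y => by
    simpa using LinearMap.ext_iff.mp hs0 y
  set τ : (∀ I : J, A ⧸ I.1) →ₗ[ℝ] ℝ := (Algebra.trace ℝ A) ∘ₗ s with hτdef
  have hXT : ∀ x : A, Algebra.trace ℝ A x = τ (π x) := by
    intro x
    have h1 : IsNilpotent (x - s (π x)) := hker _ (by rw [map_sub]; simp [hs])
    have h2 := hTr _ h1
    rw [map_sub] at h2
    have h3 : τ (π x) = Algebra.trace ℝ A (s (π x)) := rfl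
    rw [h3]
    linarith
  have hΦτ : ∀ x y : A, Φ x y = τ (π x * π y) := by
    intro x y
    rw [hΦdef, Algebra.traceForm_apply, hXT, map_mul]
  have hpos : ∀ I : J, 0 < τ (Pi.single I 1) := by
    intro I
    have hidem : IsIdempotentElem (Pi.single I (1 : A ⧸ I.1) : ∀ K : J, A ⧸ K.1) := by
      show _ * _ = _
      rw [aux_single_mul, one_mul]
    obtain ⟨a, ha1, ha2⟩ := exists_isIdempotentElem_eq_of_ker_isNilpotent
      (f := (π : A →+* ∀ I : J, A ⧸ I.1))
      (fun x hx => hker x hx) _ (hπs _) hidem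
    have ha2' : π a = Pi.single I 1 := ha2
    have hτa : τ (Pi.single I (1 : A ⧸ I.1)) = Algebra.trace ℝ A a := by
      rw [hXT, ha2']
    rw [hτa]
    have hlm : ∀ y : A, (Algebra.lmul ℝ A a) y = a * y := fun y => rfl
    have hproj : LinearMap.IsProj (LinearMap.range (Algebra.lmul ℝ A a))
        (Algebra.lmul ℝ A a) := by
      refine ⟨fun y => ⟨y, rfl⟩, ?_⟩
      rintro y ⟨z, rfl⟩
      show a * (a * z) = a * z
      rw [← mul_assoc, ha1.eq]
    have htr := hproj.trace
    rw [Algebra.trace_apply, htr]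
    have ha0 : a ≠ 0 := by
      intro h
      rw [h, map_zero] at ha2'
      have := congrFun ha2' I
      simp at this
    have hrange : LinearMap.range (Algebra.lmul ℝ A a) ≠ ⊥ := by
      intro h
      have hmem : a ∈ LinearMap.range (Algebra.lmul ℝ A a) := ⟨1, by rw [hlm, mul_one]⟩
      rw [h, Submodule.mem_bot] at hmem
      exact ha0 hmem
    have hpos' : 0 < finrank ℝ (LinearMap.range (Algebra.lmul ℝ A a)) := by
      rcases Nat.eq_zero_or_pos (finrank ℝ (LinearMap.range (Algebra.lmul ℝ A a))) with h | h
      · exact absurd (Submodule.finrank_eq_zero.mp h) hrange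
      · exact h
    exact_mod_cast hpos'
  set τI : ∀ I : J, (A ⧸ I.1) →ₗ[ℝ] ℝ :=
    fun I => τ ∘ₗ (LinearMap.single ℝ (fun K : J => A ⧸ K.1) I) with hτIdef
  have hτI : ∀ (I : J) (z : A ⧸ I.1), τI I z = τ (Pi.single I z) := fun I z => rfl
  have hτI1 : ∀ I : J, 0 < τI I 1 := fun I => hpos I
  choose u v hu hv huv hspan hv1 hv2 using fun I : J =>
    aux_field_struct (A ⧸ I.1) (τI I) (hτI1 I)
  set a : J → A := fun I => s (Pi.single I (u I)) with hadef
  set b : J → A := fun I => s (Pi.single I (v I)) with hbdef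
  have hπa : ∀ I, π (a I) = Pi.single I (u I) := fun I => hs _
  have hπb : ∀ I, π (b I) = Pi.single I (v I) := fun I => hs _
  have hkey2 : ∀ (I : J) (z w : A ⧸ I.1),
      Φ (s (Pi.single I z)) (s (Pi.single I w)) = τI I (z * w) := by
    intro I z w
    rw [hΦτ, hs, hs, aux_single_mul, hτI]
  have hkey0 : ∀ (I K : J), I ≠ K → ∀ (z : A ⧸ I.1) (w : A ⧸ K.1),
      Φ (s (Pi.single I z)) (s (Pi.single K w)) = 0 := by
    intro I K hne z w
    rw [hΦτ, hs, hs, aux_single_mul_ne hne, map_zero]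
  -- submodules
  set K2 := {I : J // finrank ℝ (A ⧸ I.1) ≠ 1} with hK2def
  set P : Submodule ℝ A := Submodule.span ℝ (Set.range a) with hPdef
  set Qn : Submodule ℝ A := Submodule.span ℝ (Set.range fun I : K2 => b I.1) with hQdef
  set Nn : Submodule ℝ A := (nilradical A).restrictScalars ℝ with hNdef
  have hNmem : ∀ x : A, x ∈ Nn ↔ IsNilpotent x := fun x => Iff.rfl
  have hNΦ : ∀ n ∈ Nn, ∀ x, Φ x n = 0 := fun n hn x => hΦnil x n ((hNmem n).mp hn)
  have hNΦ' : ∀ n ∈ Nn, ∀ x, Φ n x = 0 := fun n hn x => hΦnil' x n ((hNmem n).mp hn)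
  -- nonvanishing
  have hu0 : ∀ I, u I ≠ 0 := by
    intro I h
    have := hu I
    rw [h, mul_zero, map_zero] at this
    exact lt_irrefl 0 this
  have hv0 : ∀ I : K2, v I.1 ≠ 0 := by
    intro I h
    have := hv2 I.1 I.2
    rw [h, mul_zero, map_zero] at this
    exact lt_irrefl 0 this
  -- linear independence
  have hlia : LinearIndependent ℝ a := by
    apply LinearIndependent.of_comp π.toLinearMap
    have h1 := aux_li (M := fun I : J => A ⧸ I.1) id Function.injective_id u hu0
    have : (π.toLinearMap ∘ a) = fun I : J => (Pi.single (id I) (u I) : ∀ K : J, A ⧸ K.1) := by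
      funext I
      simp [hπa I]
    rw [this]
    exact h1
  have hlib : LinearIndependent ℝ (fun I : K2 => b I.1) := by
    apply LinearIndependent.of_comp π.toLinearMap
    have h1 := aux_li (M := fun I : J => A ⧸ I.1) (Subtype.val : K2 → J)
      Subtype.val_injective (fun I : K2 => v I.1) hv0
    have : (π.toLinearMap ∘ fun I : K2 => b I.1)
        = fun I : K2 => (Pi.single I.1 (v I.1) : ∀ K : J, A ⧸ K.1) := by
      funext I
      simp [hπb I.1]
    rw [this]
    exact h1
  have hfinP : finrank ℝ P = Fintype.card J := finrank_span_eq_card hlia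
  have hfinQ : finrank ℝ Qn = Fintype.card K2 := finrank_span_eq_card hlib
  have horthA : ∀ I K : J, I ≠ K → Φ (a I) (a K) = 0 := fun I K hne => hkey0 I K hne _ _
  have horthB : ∀ I K : K2, I ≠ K → Φ (b I.1) (b K.1) = 0 := fun I K hne =>
    hkey0 I.1 K.1 (fun h => hne (Subtype.ext h)) _ _
  have hΦaa : ∀ I : J, Φ (a I) (a I) = τI I (u I * u I) := fun I => hkey2 I _ _
  have hΦbb : ∀ I : J, Φ (b I) (b I) = τI I (v I * v I) := fun I => hkey2 I _ _
  have hbot : ∀ n ∈ (⊥ : Submodule ℝ A), ∀ x, Φ x n = 0 := by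
    intro n hn x
    rw [Submodule.mem_bot] at hn
    rw [hn, map_zero]
  have hbot' : ∀ n ∈ (⊥ : Submodule ℝ A), ∀ x, Φ n x = 0 := by
    intro n hn x
    rw [Submodule.mem_bot] at hn
    rw [hn, map_zero, LinearMap.zero_apply]
  -- positive definiteness on P
  have hPpos : ∀ x ∈ P, x ≠ 0 → 0 < Φ x x := by
    intro x hx hx0
    obtain ⟨c, hc1, hc2⟩ := aux_decomp Φ a ⊥ hbot hbot' horthA x
      (by rw [sup_bot_eq]; exact hx)
    rw [Submodule.mem_bot, sub_eq_zero] at hc1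
    have hterms : ∀ I : J, 0 ≤ c I ^ 2 * Φ (a I) (a I) := fun I =>
      mul_nonneg (sq_nonneg _) (le_of_lt (by rw [hΦaa I]; exact hu I))
    rcases eq_or_lt_of_le (Finset.sum_nonneg fun I _ => hterms I) with h | h
    · exfalso
      apply hx0
      rw [hc1]
      have hzero := (Finset.sum_eq_zero_iff_of_nonneg fun I _ => hterms I).mp h.symm
      refine Finset.sum_eq_zero fun I _ => ?_
      have hcI : c I = 0 := by
        have := hzero I (Finset.mem_univ I)
        have hpa : 0 < Φ (a I) (a I) := by rw [hΦaa I]; exact hu I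
        have := mul_eq_zero.mp this
        rcases this with h' | h'
        · exact pow_eq_zero_iff two_ne_zero |>.mp h'
        · exact absurd h' (ne_of_gt hpa)
      rw [hcI, zero_smul]
    · rw [hc2]; exact h
  -- negative definiteness on Qn
  have hQneg : ∀ x ∈ Qn, x ≠ 0 → Φ x x < 0 := by
    intro x hx hx0
    obtain ⟨c, hc1, hc2⟩ := aux_decomp Φ (fun I : K2 => b I.1) ⊥ hbot hbot' horthB x
      (by rw [sup_bot_eq]; exact hx)
    rw [Submodule.mem_bot, sub_eq_zero] at hc1
    have hterms : ∀ I : K2, c I ^ 2 * Φ (b I.1) (b I.1) ≤ 0 := fun I =>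
      mul_nonpos_of_nonneg_of_nonpos (sq_nonneg _)
        (le_of_lt (by rw [hΦbb I.1]; exact hv2 I.1 I.2))
    rcases eq_or_lt_of_le (Finset.sum_nonpos fun I _ => hterms I) with h | h
    · exfalso
      apply hx0
      rw [hc1]
      have hzero := (Finset.sum_eq_zero_iff_of_nonpos fun I _ => hterms I).mp h
      refine Finset.sum_eq_zero fun I _ => ?_
      have hcI : c I = 0 := by
        have h2 := hzero I (Finset.mem_univ I)
        have hpb : Φ (b I.1) (b I.1) < 0 := by rw [hΦbb I.1]; exact hv2 I.1 I.2
        rcases mul_eq_zero.mp h2 with h' | h'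
        · exact pow_eq_zero_iff two_ne_zero |>.mp h'
        · exact absurd h' (ne_of_lt hpb)
      rw [hcI, zero_smul]
    · rw [hc2]; exact h
  -- semidefiniteness on sups with Nn
  have hUneg : ∀ x ∈ Qn ⊔ Nn, Φ x x ≤ 0 := by
    intro x hx
    obtain ⟨c, hc1, hc2⟩ := aux_decomp Φ (fun I : K2 => b I.1) Nn hNΦ hNΦ' horthB x hx
    rw [hc2]
    refine Finset.sum_nonpos fun I _ => mul_nonpos_of_nonneg_of_nonpos (sq_nonneg _) ?_
    exact le_of_lt (by rw [hΦbb I.1]; exact hv2 I.1 I.2)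
  have hU'pos : ∀ x ∈ P ⊔ Nn, 0 ≤ Φ x x := by
    intro x hx
    obtain ⟨c, hc1, hc2⟩ := aux_decomp Φ a Nn hNΦ hNΦ' horthA x hx
    rw [hc2]
    exact Finset.sum_nonneg fun I _ => mul_nonneg (sq_nonneg _)
      (le_of_lt (by rw [hΦaa I]; exact hu I))
  -- spanning
  have hspanT : P ⊔ (Qn ⊔ Nn) = ⊤ := by
    rw [Submodule.eq_top_iff']
    intro x
    choose c d hcd using fun I : J => hspan I (π x I)
    set y : A := ∑ I : J, (c I • a I + d I • b I) with hydef
    have hπy : π y = π x := by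
      rw [hydef, map_sum]
      have h1 : ∀ I : J, π (c I • a I + d I • b I)
          = c I • (Pi.single I (u I) : ∀ K : J, A ⧸ K.1)
            + d I • (Pi.single I (v I) : ∀ K : J, A ⧸ K.1) := by
        intro I
        rw [map_add, map_smul, map_smul, hπa, hπb]
      rw [Finset.sum_congr rfl fun I _ => h1 I]
      have h2 : ∀ I : J, c I • (Pi.single I (u I) : ∀ K : J, A ⧸ K.1)
            + d I • (Pi.single I (v I) : ∀ K : J, A ⧸ K.1)
          = (Pi.single I (π x I) : ∀ K : J, A ⧸ K.1) := by
        intro I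
        rw [← aux_single_smul', ← aux_single_smul', ← aux_single_add', ← hcd I]
      rw [Finset.sum_congr rfl fun I _ => h2 I]
      exact aux_sum_single (π x)
    have hxy : x - y ∈ Nn := (hNmem _).mpr (hker _ (by rw [map_sub, hπy, sub_self]))
    have hbQ : ∀ I : J, b I ∈ Qn := by
      intro I
      by_cases h2 : finrank ℝ (A ⧸ I.1) = 1
      · have hb0' : b I = 0 := by
          rw [hbdef]
          simp only [hv1 I h2]
          rw [Pi.single_zero, map_zero]
        rw [hb0']
        exact Submodule.zero_mem _
      · exact Submodule.subset_span ⟨⟨I, h2⟩, rfl⟩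
    have hyPQ : y ∈ P ⊔ Qn := by
      refine Submodule.sum_mem _ fun I _ => Submodule.add_mem _ ?_ ?_
      · exact Submodule.mem_sup_left (Submodule.smul_mem _ _ (Submodule.subset_span ⟨I, rfl⟩))
      · exact Submodule.mem_sup_right (Submodule.smul_mem _ _ (hbQ I))
    have hxmem : x = y + (x - y) := by abel
    rw [hxmem]
    refine Submodule.add_mem _ ?_ ?_
    · exact sup_le_sup_left le_sup_left P hyPQ
    · exact Submodule.mem_sup_right (Submodule.mem_sup_right hxy)
  have hspanT' : Qn ⊔ (P ⊔ Nn) = ⊤ := by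
    rw [← hspanT]
    rw [← sup_assoc, sup_comm Qn P, sup_assoc]
  -- the greatest values
  have hgp : IsGreatest {d : ℕ | ∃ W : Submodule ℝ A, finrank ℝ W = d ∧
      ∀ x ∈ W, x ≠ 0 → 0 < Φ x x} (Fintype.card J) := by
    constructor
    · exact ⟨P, hfinP, hPpos⟩
    · rintro d ⟨W, hW, hWpos⟩
      have hdisj : W ⊓ (Qn ⊔ Nn) = ⊥ := by
        rw [Submodule.eq_bot_iff]
        rintro x ⟨hx1, hx2⟩
        by_contra hx0
        exact absurd (hWpos x hx1 hx0) (not_lt.mpr (hUneg x hx2))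
      have h1 := Submodule.finrank_sup_add_finrank_inf_eq W (Qn ⊔ Nn)
      rw [hdisj] at h1
      have h2 : finrank ℝ ↥(W ⊔ (Qn ⊔ Nn)) ≤ finrank ℝ A := Submodule.finrank_le _
      have h3 := Submodule.finrank_sup_add_finrank_inf_eq P (Qn ⊔ Nn)
      rw [hspanT] at h3
      have h4 : finrank ℝ (⊤ : Submodule ℝ A) = finrank ℝ A := finrank_top ℝ A
      have h5 : finrank ℝ (⊥ : Submodule ℝ A) = 0 := finrank_bot ℝ A
      have h6 : finrank ℝ ↥(P ⊓ (Qn ⊔ Nn)) ≥ 0 := Nat.zero_le _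
      omega
  have hgq : IsGreatest {d : ℕ | ∃ W : Submodule ℝ A, finrank ℝ W = d ∧
      ∀ x ∈ W, x ≠ 0 → Φ x x < 0} (Fintype.card K2) := by
    constructor
    · exact ⟨Qn, hfinQ, hQneg⟩
    · rintro d ⟨W, hW, hWneg⟩
      have hdisj : W ⊓ (P ⊔ Nn) = ⊥ := by
        rw [Submodule.eq_bot_iff]
        rintro x ⟨hx1, hx2⟩
        by_contra hx0
        exact absurd (hWneg x hx1 hx0) (not_lt.mpr (hU'pos x hx2))
      have h1 := Submodule.finrank_sup_add_finrank_inf_eq W (P ⊔ Nn)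
      rw [hdisj] at h1
      have h2 : finrank ℝ ↥(W ⊔ (P ⊔ Nn)) ≤ finrank ℝ A := Submodule.finrank_le _
      have h3 := Submodule.finrank_sup_add_finrank_inf_eq Qn (P ⊔ Nn)
      rw [hspanT'] at h3
      have h4 : finrank ℝ (⊤ : Submodule ℝ A) = finrank ℝ A := finrank_top ℝ A
      have h5 : finrank ℝ (⊥ : Submodule ℝ A) = 0 := finrank_bot ℝ A
      omega
  have hp : p = Fintype.card J := hT.1.unique hgp
  have hq : q = Fintype.card K2 := hT.2.unique hgq
  -- counting algebra homomorphisms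
  haveI hSS : ∀ I : J, Subsingleton ((A ⧸ I.1) →ₐ[ℝ] ℝ) := fun I => aux_hom_subsingleton _
  haveI hFin : ∀ I : J, Finite ((A ⧸ I.1) →ₐ[ℝ] ℝ) := fun I => Finite.of_subsingleton
  letI : ∀ I : J, Fintype ((A ⧸ I.1) →ₐ[ℝ] ℝ) := fun I => Fintype.ofFinite _
  set G : (Σ I : J, ((A ⧸ I.1) →ₐ[ℝ] ℝ)) → (A →ₐ[ℝ] ℝ) :=
    fun w => w.2.comp (Ideal.Quotient.mkₐ ℝ w.1.1) with hGdef
  have hGi : Function.Injective G := by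
    rintro ⟨I, ψ⟩ ⟨K, χ⟩ h
    have hIK : I = K := by
      apply Subtype.ext
      ext x
      constructor
      · intro hx
        have h1 : ψ (Ideal.Quotient.mk I.1 x) = 0 := by
          rw [Ideal.Quotient.eq_zero_iff_mem.mpr hx, map_zero]
        have h2 : χ (Ideal.Quotient.mk K.1 x) = 0 := by
          have := AlgHom.congr_fun h x
          simp only [hGdef, AlgHom.comp_apply, Ideal.Quotient.mkₐ_eq_mk] at this
          rw [← this]
          exact h1
        have hinj : Function.Injective χ := χ.toRingHom.injective
        rw [← Ideal.Quotient.eq_zero_iff_mem]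
        exact hinj (by rw [h2, map_zero])
      · intro hx
        have h2 : χ (Ideal.Quotient.mk K.1 x) = 0 := by
          rw [Ideal.Quotient.eq_zero_iff_mem.mpr hx, map_zero]
        have h1 : ψ (Ideal.Quotient.mk I.1 x) = 0 := by
          have := AlgHom.congr_fun h x
          simp only [hGdef, AlgHom.comp_apply, Ideal.Quotient.mkₐ_eq_mk] at this
          rw [this]
          exact h2
        have hinj : Function.Injective ψ := ψ.toRingHom.injective
        rw [← Ideal.Quotient.eq_zero_iff_mem]
        exact hinj (by rw [h1, map_zero])
    subst hIK
    simp only [Sigma.mk.inj_iff, heq_eq_eq, true_and]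
    ext z
    obtain ⟨x, rfl⟩ := Ideal.Quotient.mk_surjective z
    exact AlgHom.congr_fun h x
  have hGs : Function.Surjective G := by
    intro φ
    have hφs : Function.Surjective φ := fun c => ⟨algebraMap ℝ A c, φ.commutes c⟩
    have hmax : (RingHom.ker (φ : A →+* ℝ)).IsMaximal :=
      RingHom.ker_isMaximal_of_surjective _ hφs
    refine ⟨⟨⟨RingHom.ker (φ : A →+* ℝ), hmax⟩,
      Ideal.Quotient.liftₐ _ φ (fun a ha => ha)⟩, ?_⟩
    exact Ideal.Quotient.liftₐ_comp _ _ _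
  have hcount : Nat.card (A →ₐ[ℝ] ℝ) = ∑ I : J, Nat.card ((A ⧸ I.1) →ₐ[ℝ] ℝ) := by
    rw [← Nat.card_congr (Equiv.ofBijective G ⟨hGi, hGs⟩)]
    rw [Nat.card_eq_fintype_card, Fintype.card_sigma]
    exact Finset.sum_congr rfl fun I _ => (Nat.card_eq_fintype_card).symm
  have hcount2 : Nat.card (A →ₐ[ℝ] ℝ)
      = Fintype.card {I : J // finrank ℝ (A ⧸ I.1) = 1} := by
    rw [hcount, Fintype.card_subtype, Finset.card_filter]
    exact Finset.sum_congr rfl fun I _ => aux_hom_card (A ⧸ I.1)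
  have hsplit : Fintype.card {I : J // finrank ℝ (A ⧸ I.1) = 1} + Fintype.card K2
      = Fintype.card J := by
    have h1 := Fintype.card_subtype_compl (fun I : J => finrank ℝ (A ⧸ I.1) = 1)
    have h2 := Fintype.card_subtype_le (fun I : J => finrank ℝ (A ⧸ I.1) = 1)
    have h3 : Fintype.card K2 = Fintype.card {I : J // ¬ (finrank ℝ (A ⧸ I.1) = 1)} :=
      Fintype.card_congr (Equiv.refl _)
    omega
  haveI hAFin : Finite (A →ₐ[ℝ] ℝ) := Finite.of_surjective G hGs
  constructor
  · rw [hcount2, hp, hq]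
    have := hsplit
    push_cast
    omega
  · have h1 : Nonempty (A →ₐ[ℝ] ℝ) ↔ Nat.card (A →ₐ[ℝ] ℝ) ≠ 0 := by
      constructor
      · intro hne
        exact Nat.card_ne_zero.mpr ⟨hne, hAFin⟩
      · intro h
        exact (Nat.card_ne_zero.mp h).1
    rw [h1, hcount2, hp, hq]
    omega
end

section
/- Let A be a finite-dimensional commutative algebra over ℝ (or a real closed field K). The trace form Tr_K^A is positive definite if and only if A is isomorphic as a K-algebra to K^{dim_K A}. -/
open Module

private lemma trace_pi_real' {n : ℕ} (x : Fin n → ℝ) :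
    Algebra.trace ℝ (Fin n → ℝ) x = ∑ i, x i := by
  classical
  rw [Algebra.trace_eq_matrix_trace (Pi.basisFun ℝ (Fin n))]
  simp [Matrix.trace, Matrix.diag, Algebra.leftMulMatrix_apply, LinearMap.toMatrix_apply]

private def piReindex' {ι κ : Type*} (e : κ ≃ ι) : (ι → ℝ) ≃ₐ[ℝ] (κ → ℝ) where
  toFun f := f ∘ e
  invFun g := g ∘ e.symm
  left_inv f := by funext i; simp
  right_inv g := by funext i; simp
  map_mul' f g := rfl
  map_add' f g := rfl
  commutes' r := rfl

theorem stmt_14 (A : Type*) [CommRing A] [Algebra ℝ A] [FiniteDimensional ℝ A] :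
    (∀ x : A, x ≠ 0 → 0 < Algebra.traceForm ℝ A x x) ↔
      Nonempty (A ≃ₐ[ℝ] (Fin (Module.finrank ℝ A) → ℝ)) := by
  classical
  constructor
  · intro h
    -- A is reduced
    have hred : IsReduced A := by
      constructor
      intro x hx
      by_contra hx0
      have h2 : IsNilpotent (x * x) := by
        obtain ⟨n, hn⟩ := hx
        exact ⟨n, by rw [mul_pow, hn, mul_zero]⟩
      have h3 : IsNilpotent ((Algebra.lmul ℝ A) (x * x)) := h2.map (Algebra.lmul ℝ A)
      have ht : Algebra.traceForm ℝ A x x = 0 := by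
        have := (LinearMap.isNilpotent_trace_of_isNilpotent h3).eq_zero
        simpa [Algebra.traceForm_apply, Algebra.trace_apply] using this
      exact absurd (h x hx0) (by simp [ht])
    have hart : IsArtinianRing A := isArtinian_of_tower ℝ inferInstance
    have hfin := (IsArtinianRing.setOfPred_isMaximal_finite A).to_subtype
    set ι := {I : Ideal A | I.IsMaximal} with hι
    letI : Fintype ι := Fintype.ofFinite ι
    letI : ∀ I : ι, Field (A ⧸ I.1) := fun I =>
      have := Set.mem_setOf.mp I.2
      Ideal.Quotient.field I.1
    let π : A ≃+* ∀ I : ι, A ⧸ I.1 :=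
      { toFun := fun x I => Ideal.Quotient.mk I.1 x
        invFun := fun f => (IsArtinianRing.equivPi A).symm (fun m => f ⟨m.asIdeal, m.isMaximal⟩)
        left_inv := fun x => (IsArtinianRing.equivPi A).symm_apply_apply x
        right_inv := fun f => by
          funext I
          exact congrFun ((IsArtinianRing.equivPi A).apply_symm_apply
            (fun m => f ⟨m.asIdeal, m.isMaximal⟩)) ⟨I.1, I.2⟩
        map_mul' := fun x y => rfl
        map_add' := fun x y => rfl }
    have hπ : ∀ (x : A) (I : ι), π x I = Ideal.Quotient.mk I.1 x := fun x I => rfl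
    let πₐ : A ≃ₐ[ℝ] (∀ I : ι, A ⧸ I.1) := AlgEquiv.ofRingEquiv (f := π) (by
      intro r
      funext I
      rw [hπ]
      show _ = algebraMap ℝ (A ⧸ I.1) r
      rw [IsScalarTower.algebraMap_apply ℝ A (A ⧸ I.1), Ideal.Quotient.algebraMap_eq])
    -- each quotient has finrank 1
    have hone : ∀ I : ι, finrank ℝ (A ⧸ I.1) = 1 := by
      intro I
      set F := A ⧸ I.1 with hF
      have halg : Algebra.IsAlgebraic ℝ F := Algebra.IsAlgebraic.of_finite ℝ F
      let φ : F →ₐ[ℝ] ℂ := IsAlgClosed.lift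
      have hinj : Function.Injective φ := φ.toRingHom.injective
      have hle : finrank ℝ F ≤ 2 := by
        have := LinearMap.finrank_le_finrank_of_injective (f := φ.toLinearMap) hinj
        rwa [Complex.finrank_real_complex] at this
      have hpos : 0 < finrank ℝ F := finrank_pos
      interval_cases hval : finrank ℝ F
      · rfl
      · -- finrank = 2 : F ≃ ℂ, derive contradiction
        exfalso
        have hsurj : Function.Surjective φ := by
          have hdim : finrank ℝ F = finrank ℝ ℂ := by
            rw [hval, Complex.finrank_real_complex]
          let le := φ.toLinearMap.linearEquivOfInjective hinj hdim
          intro y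
          refine ⟨le.symm y, ?_⟩
          have hy := le.apply_symm_apply y
          exact hy
        let e : F ≃ₐ[ℝ] ℂ := AlgEquiv.ofBijective φ ⟨hinj, hsurj⟩
        let z : F := e.symm Complex.I
        have hz2 : z * z = -1 := by
          have : e (z * z) = e (-1) := by
            simp [z, map_mul, map_neg, map_one, Complex.I_mul_I]
          exact e.injective this
        have hzne : z ≠ 0 := by
          simp only [z, ne_eq, map_eq_zero_iff _ e.symm.injective]
          exact Complex.I_ne_zero
        -- lift to A
        let y : A := πₐ.symm (Pi.single I z)
        let eA : A := πₐ.symm (Pi.single I 1)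
        have hsingle_mul : ∀ (a b : F),
            (Pi.single I a : ∀ J : ι, A ⧸ J.1) * Pi.single I b = Pi.single I (a * b) := by
          intro a b
          funext J
          by_cases hJ : J = I
          · subst hJ; simp
          · simp [Pi.single_eq_of_ne hJ]
        have hyy : y * y = -eA := by
          simp only [y, eA, ← map_mul πₐ.symm]
          rw [hsingle_mul, hz2]
          rw [← map_neg]
          congr 1
          funext J
          by_cases hJ : J = I
          · subst hJ; simp
          · simp [Pi.single_eq_of_ne hJ]
        have heAeA : eA * eA = eA := by
          simp only [eA, ← map_mul πₐ.symm]
          rw [hsingle_mul, one_mul]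
        have hyne : y ≠ 0 := by
          simp only [y, ne_eq, map_eq_zero_iff _ πₐ.symm.injective]
          intro hc
          apply hzne
          have := congrFun hc I
          simpa using this
        have heAne : eA ≠ 0 := by
          simp only [eA, ne_eq, map_eq_zero_iff _ πₐ.symm.injective]
          intro hc
          have := congrFun hc I
          simp at this
        have h1 := h y hyne
        have h2 := h eA heAne
        rw [Algebra.traceForm_apply, hyy, map_neg] at h1
        rw [Algebra.traceForm_apply, heAeA] at h2
        linarith
    -- assemble
    let ψ : ∀ I : ι, (A ⧸ I.1) ≃ₐ[ℝ] ℝ := fun I => by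
      have hinj : Function.Injective (Algebra.ofId ℝ (A ⧸ I.1)) :=
        (Algebra.ofId ℝ (A ⧸ I.1)).toRingHom.injective
      have hdim : finrank ℝ ℝ = finrank ℝ (A ⧸ I.1) := by
        rw [hone I, finrank_self]
      have hsurj : Function.Surjective (Algebra.ofId ℝ (A ⧸ I.1)) := by
        let le := (Algebra.ofId ℝ (A ⧸ I.1)).toLinearMap.linearEquivOfInjective hinj hdim
        intro y
        refine ⟨le.symm y, ?_⟩
        have hy := le.apply_symm_apply y
        exact hy
      exact (AlgEquiv.ofBijective (Algebra.ofId ℝ (A ⧸ I.1)) ⟨hinj, hsurj⟩).symm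
    let Φ : A ≃ₐ[ℝ] (ι → ℝ) := πₐ.trans (AlgEquiv.piCongrRight ψ)
    have hcard : Fintype.card ι = finrank ℝ A := by
      have := Φ.toLinearEquiv.finrank_eq
      rw [finrank_pi ℝ] at this
      omega
    exact ⟨Φ.trans (piReindex' (Fintype.equivFinOfCardEq hcard).symm)⟩
  · rintro ⟨e⟩ x hx
    rw [Algebra.traceForm_apply, ← Algebra.trace_eq_of_algEquiv e (x * x), map_mul,
      trace_pi_real']
    have hex : e x ≠ 0 := fun hc => hx (by simpa using e.injective (by simpa using hc))
    obtain ⟨i, hi⟩ := Function.ne_iff.mp hex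
    exact Finset.sum_pos' (fun j _ => mul_self_nonneg _)
      ⟨i, Finset.mem_univ i, mul_self_pos.mpr hi⟩
end

section
/- Let A be a finite-dimensional commutative algebra over ℝ (or a real closed field K), α : A → K a K-linear form, and Φ_α the symmetric bilinear form Φ_α(f,g) = α(fg). If the signature of Φ_α is nonzero, then there exists a K-algebra homomorphism A → K (i.e., A has a K-rational point). -/
-- square root of 1 + nilpotent
lemma sqrt_one_add_nilpotent {R : Type*} [CommRing R] [Algebra ℝ R] :
    ∀ (k : ℕ) (n : R), n ^ k = 0 → ∃ u : R, u ^ 2 = 1 + n := by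
  intro k
  induction k using Nat.strong_induction_on with
  | _ k IH =>
  intro n hn
  match k, hn with
  | 0, hn =>
    have : (1 : R) = 0 := by simpa using hn
    have hs : Subsingleton R := subsingleton_of_zero_eq_one this.symm
    exact ⟨1, Subsingleton.elim _ _⟩
  | 1, hn =>
    simp only [pow_one] at hn
    exact ⟨1, by rw [hn]; ring⟩
  | (k+2), hn =>
    set c : R := algebraMap ℝ R (1/2) with hc
    have h2c : 2 * c = 1 := by
      rw [hc, ← map_ofNat (algebraMap ℝ R) 2, ← map_mul, ← map_one (algebraMap ℝ R)]
      norm_num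
    set v : R := 1 + c * n with hv
    have hvsq : v ^ 2 = 1 + n + c ^ 2 * n ^ 2 := by
      rw [hv]; linear_combination n * h2c
    have hnil : IsNilpotent (c * n) := by
      exact (Commute.all c n).isNilpotent_mul_left ⟨k + 2, hn⟩
    have hv' : IsUnit v := by rw [hv]; exact hnil.isUnit_one_add
    obtain ⟨vu, hvu'⟩ := hv' 
    set d : R := c * (↑vu⁻¹ : Rˣ) with hd
    set m : R := -(d ^ 2 * n ^ 2) with hm
    have hmk : m ^ (k + 1) = 0 := by
      have h2k : n ^ (2 * (k + 1)) = 0 := by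
        have : 2 * (k + 1) = (k + 2) + k := by ring
        rw [this, pow_add, hn, zero_mul]
      rw [hm, neg_pow, mul_pow, ← pow_mul n 2 (k + 1), h2k]
      simp
    obtain ⟨t, ht⟩ := IH (k + 1) (by omega) m hmk
    refine ⟨v * t, ?_⟩
    have hvinv : v * (↑vu⁻¹ : Rˣ) = 1 := by
      rw [← hvu']; exact_mod_cast vu.mul_inv
    calc (v * t) ^ 2 = v ^ 2 * t ^ 2 := by ring
      _ = v ^ 2 * (1 + m) := by rw [ht]
      _ = v ^ 2 - (c * n) ^ 2 * (v * (↑vu⁻¹ : Rˣ)) ^ 2 := by rw [hm, hd]; ring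
      _ = v ^ 2 - (c * n) ^ 2 := by rw [hvinv]; ring
      _ = 1 + n := by rw [hvsq]; ring

lemma exists_sqrt_neg_one_of_nilpotent {R : Type*} [CommRing R] [Algebra ℝ R]
    (a : R) (h : IsNilpotent (a ^ 2 + 1)) : ∃ j : R, j ^ 2 = -1 := by
  obtain ⟨k, hk⟩ := h
  set e : R := a ^ 2 + 1 with he
  have h1e : (1 : R) - e = -(a ^ 2) := by rw [he]; ring
  have hu : IsUnit ((1 : R) - e) := IsNilpotent.isUnit_one_sub ⟨k, hk⟩
  obtain ⟨w, hw⟩ := hu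
  have hw1 : (w : R) * (↑w⁻¹ : Rˣ) = 1 := w.mul_inv
  -- (w⁻¹) = 1 + n with n nilpotent
  have hn : ((↑w⁻¹ : Rˣ) : R) - 1 = (↑w⁻¹ : Rˣ) * e := by
    have : ((↑w⁻¹ : Rˣ) : R) * (1 - e) = 1 := by rw [← hw]; exact_mod_cast w.inv_mul
    linear_combination this
  have hnil : IsNilpotent (((↑w⁻¹ : Rˣ) : R) * e) :=
    (Commute.all _ e).isNilpotent_mul_left ⟨k, hk⟩
  obtain ⟨k', hk'⟩ := hnil
  obtain ⟨u, hu2⟩ := sqrt_one_add_nilpotent k' _ hk'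
  refine ⟨a * u, ?_⟩
  have : ((↑w⁻¹ : Rˣ) : R) = 1 + (↑w⁻¹ : Rˣ) * e := by linear_combination hn
  have hu2' : u ^ 2 = (↑w⁻¹ : Rˣ) := by rw [hu2, ← this]
  have hwinv : ((1 : R) - e) * (↑w⁻¹ : Rˣ) = 1 := by
    rw [← hw]; exact_mod_cast w.mul_inv
  calc (a * u) ^ 2 = a ^ 2 * u ^ 2 := by ring
    _ = -((1 - e) * (↑w⁻¹ : Rˣ)) := by rw [hu2', ← neg_neg (a ^ 2), ← h1e]; ring
    _ = -1 := by rw [hwinv]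

-- field case
lemma field_case (L : Type*) [Field L] [Algebra ℝ L] [FiniteDimensional ℝ L] :
    Nonempty (L →ₐ[ℝ] ℝ) ∨ ∃ i : L, i ^ 2 = -1 := by
  have : Algebra.IsAlgebraic ℝ L := Algebra.IsAlgebraic.of_finite ℝ L
  let ψ : L →ₐ[ℝ] ℂ := IsAlgClosed.lift
  have hinj : Function.Injective ψ := ψ.toRingHom.injective
  have hrank : Module.finrank ℝ (LinearMap.range ψ.toLinearMap) = Module.finrank ℝ L :=
    LinearMap.finrank_range_of_inj hinj
  have hle : Module.finrank ℝ L ≤ 2 := by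
    rw [← hrank]
    calc Module.finrank ℝ (LinearMap.range ψ.toLinearMap) ≤ Module.finrank ℝ ℂ :=
        (LinearMap.range ψ.toLinearMap).finrank_le
      _ = 2 := Complex.finrank_real_complex
  have hpos : 0 < Module.finrank ℝ L := Module.finrank_pos
  obtain h | h : Module.finrank ℝ L = 1 ∨ Module.finrank ℝ L = 2 := by omega
  · -- finrank 1 : L ≅ ℝ
    left
    have hbt : (⊥ : Subalgebra ℝ L) = ⊤ := Subalgebra.bot_eq_top_of_finrank_eq_one h
    exact ⟨(Algebra.botEquiv ℝ L).toAlgHom.comp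
      ((Subalgebra.equivOfEq ⊤ ⊥ hbt.symm).toAlgHom.comp Subalgebra.topEquiv.symm.toAlgHom)⟩
  · -- finrank 2 : range = ℂ
    right
    have htop : LinearMap.range ψ.toLinearMap = ⊤ := by
      apply Submodule.eq_top_of_finrank_eq
      rw [hrank, h, Complex.finrank_real_complex]
    have hI : Complex.I ∈ LinearMap.range ψ.toLinearMap := htop ▸ Submodule.mem_top
    obtain ⟨i, hi⟩ := hI
    refine ⟨i, hinj ?_⟩
    rw [map_pow, map_neg, map_one]
    rw [show ψ.toLinearMap i = ψ i from rfl] at hi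
    rw [hi, Complex.I_sq]


theorem stmt_16 (A : Type*) [CommRing A] [Algebra ℝ A] [FiniteDimensional ℝ A]
    (α : A →ₗ[ℝ] ℝ) (Φ : A →ₗ[ℝ] A →ₗ[ℝ] ℝ)
    (hΦ : ∀ f g : A, Φ f g = α (f * g))
    (p q : ℕ) (hT : Φ.IsTypeOf p q) (hsign : p ≠ q) :
    Nonempty (A →ₐ[ℝ] ℝ) := by
  by_contra hne
  -- A is artinian
  have hart : IsArtinianRing A := isArtinian_of_tower ℝ inferInstance
  -- in each residue field there is a square root of -1
  have key : ∀ I : MaximalSpectrum A, ∃ x : A ⧸ I.1, x ^ 2 = -1 := by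
    intro I
    have hmax : I.1.IsMaximal := I.2
    letI : Field (A ⧸ I.1) := Ideal.Quotient.field I.1
    haveI : FiniteDimensional ℝ (A ⧸ I.1) :=
      Module.Finite.of_surjective (Ideal.Quotient.mkₐ ℝ I.1).toLinearMap
        (Ideal.Quotient.mkₐ_surjective ℝ I.1)
    rcases field_case (A ⧸ I.1) with hφ | hi
    · exact absurd ⟨(Classical.choice hφ).comp (Ideal.Quotient.mkₐ ℝ I.1)⟩ hne
    · exact hi
  choose i hi using key
  -- CRT: square root of -1 mod nilradical
  let E := IsArtinianRing.quotNilradicalEquivPi A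
  have hj0 : (E.symm i) ^ 2 = -1 := by
    have hii : i ^ 2 = -1 := by
      funext I
      simpa using hi I
    rw [← map_pow, hii, map_neg, map_one]
  obtain ⟨a, ha⟩ := Ideal.Quotient.mk_surjective (I := nilradical A) (E.symm i)
  have hnil : IsNilpotent (a ^ 2 + 1) := by
    rw [← mem_nilradical, ← Ideal.Quotient.eq_zero_iff_mem, map_add, map_pow, map_one, ha,
      hj0]
    ring
  obtain ⟨j, hj⟩ := exists_sqrt_neg_one_of_nilpotent a hnil
  -- multiplication by j as a linear equivalence
  have hjinv : ∀ x : A, (-j) * (j * x) = x := by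
    intro x
    have : (-j) * (j * x) = -(j ^ 2) * x := by ring
    rw [this, hj]; ring
  let J : A →ₗ[ℝ] A := LinearMap.mulLeft ℝ j
  have hJbij : Function.Bijective J := by
    constructor
    · intro x y hxy
      have := congrArg (fun z => (-j) * z) hxy
      simpa [J, LinearMap.mulLeft_apply, hjinv] using this
    · intro y
      exact ⟨(-j) * y, by simpa [J, LinearMap.mulLeft_apply] using hjinv y⟩
  let Je : A ≃ₗ[ℝ] A := LinearEquiv.ofBijective J hJbij
  -- J flips the sign of Φ
  have hflip : ∀ x : A, Φ (j * x) (j * x) = -Φ x x := by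
    intro x
    rw [hΦ, hΦ]
    have : (j * x) * (j * x) = -(x * x) + (j ^ 2 + 1) * (x * x) := by ring
    rw [this, hj]
    simp
  -- hence p ≤ q and q ≤ p
  have hpq : p ≤ q := by
    obtain ⟨Wp, hWp, hWppos⟩ := hT.1.1
    apply hT.2.2
    refine ⟨Wp.map Je.toLinearMap, ?_, ?_⟩
    · rw [LinearEquiv.finrank_map_eq]; exact hWp
    · rintro y ⟨x, hx, rfl⟩ hy0
      have hx0 : x ≠ 0 := by rintro rfl; simp at hy0
      have := hWppos x hx hx0
      have hJx : Je.toLinearMap x = j * x := rfl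
      rw [hJx, hflip]
      linarith
  have hqp : q ≤ p := by
    obtain ⟨Wq, hWq, hWqneg⟩ := hT.2.1
    apply hT.1.2
    refine ⟨Wq.map Je.toLinearMap, ?_, ?_⟩
    · rw [LinearEquiv.finrank_map_eq]; exact hWq
    · rintro y ⟨x, hx, rfl⟩ hy0
      have hx0 : x ≠ 0 := by rintro rfl; simp at hy0
      have := hWqneg x hx hx0
      have hJx : Je.toLinearMap x = j * x := rfl
      rw [hJx, hflip]
      linarith
  exact hsign (le_antisymm hpq hqp)
end

section
/- Let g ∈ ℝ[X] be monic and squarefree with roots a₁,…,a_r ∈ ℝ and z₁, z̄₁, …, z_s, z̄_s ∈ ℂ ∖ ℝ, let A = ℝ[X]/⟨g⟩, and let H ∈ ℝ[X] with image h in A. Then the generalized trace form Φ_h(f,f') = Tr_ℝ^A(h f f') has signature equal to #{i : H(aᵢ) > 0} − #{i : H(aᵢ) < 0}, and rank equal to the number of roots z of g in ℂ with H(z) ≠ 0. -/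
open Polynomial

namespace PRS18
noncomputable section

/-- complexification of g -/
def gc (g : ℝ[X]) : ℂ[X] := g.map (algebraMap ℝ ℂ)

lemma gc_def (g : ℝ[X]) : gc g = g.map (algebraMap ℝ ℂ) := rfl

/-- the finset of complex roots -/
def Rf (g : ℝ[X]) : Finset ℂ := (gc g).roots.toFinset

/-- Lagrange basis polynomial -/
def L (g : ℝ[X]) (z : ℂ) : ℂ[X] :=
  C (((gc g).derivative.eval z)⁻¹) * ((gc g) /ₘ (X - C z))

def 𝔠 (H : ℝ[X]) (z : ℂ) : ℂ := (H.map (algebraMap ℝ ℂ)).eval z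

/-- real-part polynomial -/
def realify (Q : ℂ[X]) : ℝ[X] := ∑ i ∈ Q.support, Polynomial.monomial i (Q.coeff i).re

lemma realify_coeff (Q : ℂ[X]) (i : ℕ) : (realify Q).coeff i = (Q.coeff i).re := by
  rw [realify, finset_sum_coeff]
  simp only [coeff_monomial]
  rw [Finset.sum_ite_eq' Q.support i (fun b => (Q.coeff b).re)]
  by_cases hi : i ∈ Q.support
  · rw [if_pos hi]
  · rw [if_neg hi, Polynomial.notMem_support_iff.mp hi]
    simp

lemma realify_map {Q : ℂ[X]} (hQ : Q.map (starRingEnd ℂ) = Q) :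
    (realify Q).map (algebraMap ℝ ℂ) = Q := by
  ext i
  rw [coeff_map, realify_coeff]
  have h1 : (starRingEnd ℂ) (Q.coeff i) = Q.coeff i := by
    conv_rhs => rw [← hQ]
    rw [coeff_map]
  have h2 := Complex.conj_eq_iff_re.mp h1
  simpa using h2

lemma map_conj_real (F : ℝ[X]) :
    (F.map (algebraMap ℝ ℂ)).map (starRingEnd ℂ) = F.map (algebraMap ℝ ℂ) := by
  rw [map_map]
  congr 1
  ext x
  simp

lemma eval_conj (F : ℝ[X]) (z : ℂ) :
    (F.map (algebraMap ℝ ℂ)).eval ((starRingEnd ℂ) z) =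
      (starRingEnd ℂ) ((F.map (algebraMap ℝ ℂ)).eval z) := by
  conv_lhs => rw [← map_conj_real F]
  rw [eval_map, eval₂_at_apply]

lemma eval_ofReal (F : ℝ[X]) (a : ℝ) :
    (F.map (algebraMap ℝ ℂ)).eval (a : ℂ) = ((F.eval a : ℝ) : ℂ) := by
  rw [eval_map, show ((a : ℂ)) = algebraMap ℝ ℂ a from rfl, eval₂_at_apply]
  rfl

variable {g : ℝ[X]}

lemma gc_monic (hg : g.Monic) : (gc g).Monic := hg.map _

lemma gc_natDegree : (gc g).natDegree = g.natDegree := natDegree_map _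

lemma mem_Rf (hg : g.Monic) {z : ℂ} : z ∈ Rf g ↔ (gc g).eval z = 0 := by
  rw [Rf, Multiset.mem_toFinset, mem_roots ((gc_monic hg).ne_zero)]
  exact ⟨fun h => h, fun h => h⟩

lemma conj_mem_Rf (hg : g.Monic) {z : ℂ} (hz : z ∈ Rf g) : (starRingEnd ℂ) z ∈ Rf g := by
  rw [mem_Rf hg] at hz ⊢
  rw [gc_def] at hz ⊢
  rw [eval_conj, hz, map_zero]

lemma sep (hsf : Squarefree g) : g.Separable := PerfectField.separable_iff_squarefree.mpr hsf

lemma nodup_Rf (hsf : Squarefree g) : (gc g).roots.Nodup := nodup_roots ((sep hsf).map)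

lemma card_Rf (hg : g.Monic) (hsf : Squarefree g) : (Rf g).card = g.natDegree := by
  rw [Rf, Multiset.toFinset_card_of_nodup (nodup_Rf hsf)]
  rw [← gc_natDegree]
  exact (IsAlgClosed.splits (gc g)).natDegree_eq_card_roots.symm

lemma deriv_ne (hsf : Squarefree g) {z : ℂ} (hz : (gc g).eval z = 0) :
    (gc g).derivative.eval z ≠ 0 := by
  simp only [gc_def, eval_map] at hz
  have h := (sep hsf).eval₂_derivative_ne_zero (algebraMap ℝ ℂ) (x := z) hz
  rwa [gc_def, derivative_map, eval_map]

lemma L_mul (hg : g.Monic) {z : ℂ} (hz : z ∈ Rf g) :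
    (X - C z) * L g z = C (((gc g).derivative.eval z)⁻¹) * gc g := by
  rw [L, mul_left_comm]
  congr 1
  exact mul_divByMonic_eq_iff_isRoot.mpr ((mem_Rf hg).mp hz)

lemma eval_L_self (hg : g.Monic) (hsf : Squarefree g) {z : ℂ} (hz : z ∈ Rf g) :
    (L g z).eval z = 1 := by
  have hroot := (mem_Rf hg).mp hz
  have hq : (X - C z) * ((gc g) /ₘ (X - C z)) = gc g := mul_divByMonic_eq_iff_isRoot.mpr hroot
  have h2 := congrArg (Polynomial.eval z) (congrArg derivative hq)
  rw [derivative_mul, derivative_sub, derivative_X, derivative_C, sub_zero, one_mul] at h2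
  simp only [eval_add, eval_mul, eval_sub, eval_X, eval_C, sub_self, zero_mul, add_zero] at h2
  rw [L, eval_mul, eval_C, h2]
  exact inv_mul_cancel₀ (deriv_ne hsf hroot)

lemma eval_L_ne (hg : g.Monic) {z w : ℂ} (hz : z ∈ Rf g) (hw : w ∈ Rf g) (hne : w ≠ z) :
    (L g z).eval w = 0 := by
  have hq : (X - C z) * ((gc g) /ₘ (X - C z)) = gc g :=
    mul_divByMonic_eq_iff_isRoot.mpr ((mem_Rf hg).mp hz)
  have h0 := congrArg (Polynomial.eval w) hq
  rw [(mem_Rf hg).mp hw] at h0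
  simp only [eval_mul, eval_sub, eval_X, eval_C] at h0
  have : ((gc g) /ₘ (X - C z)).eval w = 0 :=
    (mul_eq_zero.mp h0).resolve_left (sub_ne_zero.mpr hne)
  rw [L, eval_mul, eval_C, this, mul_zero]

lemma eval_L (hg : g.Monic) (hsf : Squarefree g) {z w : ℂ} (hz : z ∈ Rf g) (hw : w ∈ Rf g) :
    (L g z).eval w = if w = z then 1 else 0 := by
  split_ifs with h
  · rw [h]; exact eval_L_self hg hsf hz
  · exact eval_L_ne hg hz hw h

lemma conj_L (z : ℂ) :
    (L g z).map (starRingEnd ℂ) = L g ((starRingEnd ℂ) z) := by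
  rw [L, L, Polynomial.map_mul, map_C, map_inv₀]
  have hder : (gc g).derivative = (derivative g).map (algebraMap ℝ ℂ) := by
    rw [gc_def, derivative_map]
  congr 1
  · rw [hder, eval_conj]
  · rw [map_divByMonic _ (monic_X_sub_C z),
      show (gc g).map (starRingEnd ℂ) = gc g from map_conj_real g]
    congr 1
    simp


section TraceFormula
variable {g : ℝ[X]}

lemma aeval_root_gc : aeval (AdjoinRoot.root (gc g)) g = 0 := by
  rw [← aeval_map_algebraMap ℂ, ← gc_def, AdjoinRoot.aeval_eq, AdjoinRoot.mk_self]

def ψ (g : ℝ[X]) : AdjoinRoot g →ₐ[ℝ] AdjoinRoot (gc g) :=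
  AdjoinRoot.liftAlgHom g (Algebra.ofId ℝ _) (AdjoinRoot.root (gc g))
    (by rw [← aeval_root_gc, aeval_def]; rfl)

lemma ψ_mk (F : ℝ[X]) :
    ψ g (AdjoinRoot.mk g F) = AdjoinRoot.mk (gc g) (F.map (algebraMap ℝ ℂ)) := by
  rw [ψ, AdjoinRoot.liftAlgHom_mk]
  show aeval (AdjoinRoot.root (gc g)) F = _
  rw [← aeval_map_algebraMap ℂ, AdjoinRoot.aeval_eq]

lemma repr_compat (hg : g.Monic) (F : ℝ[X]) (i : Fin g.natDegree) :
    ((AdjoinRoot.powerBasisAux' (gc_monic hg)).reindex (finCongr gc_natDegree)).repr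
      (AdjoinRoot.mk (gc g) (F.map (algebraMap ℝ ℂ))) i
      = algebraMap ℝ ℂ ((AdjoinRoot.powerBasisAux' hg).repr (AdjoinRoot.mk g F) i) := by
  rw [Module.Basis.repr_reindex_apply, AdjoinRoot.powerBasisAux'_repr_apply_to_fun,
    AdjoinRoot.powerBasisAux'_repr_apply_to_fun, AdjoinRoot.modByMonicHom_mk,
    AdjoinRoot.modByMonicHom_mk]
  show (F.map (algebraMap ℝ ℂ) %ₘ gc g).coeff ((i : ℕ)) = _
  rw [gc_def, ← map_modByMonic _ hg, coeff_map]

lemma trace_psi (hg : g.Monic) (u : AdjoinRoot g) :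
    Algebra.trace ℂ (AdjoinRoot (gc g)) (ψ g u)
      = algebraMap ℝ ℂ (Algebra.trace ℝ (AdjoinRoot g) u) := by
  classical
  set b := AdjoinRoot.powerBasisAux' hg with hb
  set bc := (AdjoinRoot.powerBasisAux' (gc_monic hg)).reindex (finCongr gc_natDegree) with hbc
  rw [Algebra.trace_eq_matrix_trace b u, Algebra.trace_eq_matrix_trace bc (ψ g u),
    Matrix.trace, Matrix.trace, map_sum]
  refine Finset.sum_congr rfl fun i _ => ?_
  simp only [Matrix.diag]
  rw [Algebra.leftMulMatrix_eq_repr_mul, Algebra.leftMulMatrix_eq_repr_mul]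
  have hbi : b i = AdjoinRoot.root g ^ (i : ℕ) := by
    have := (AdjoinRoot.powerBasis' hg).basis_eq_pow i
    exact this
  have hbci : bc i = AdjoinRoot.root (gc g) ^ (i : ℕ) := by
    rw [hbc, Module.Basis.reindex_apply]
    have := (AdjoinRoot.powerBasis' (gc_monic hg)).basis_eq_pow ((finCongr gc_natDegree).symm i)
    exact this
  have hpsib : ψ g (b i) = bc i := by
    rw [hbi, hbci, map_pow, ψ, AdjoinRoot.liftAlgHom_root]
  rw [← hpsib, ← map_mul]
  obtain ⟨F, hF⟩ := AdjoinRoot.mk_surjective (u * b i)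
  rw [← hF, ψ_mk, repr_compat hg]

lemma L_smul (hg : g.Monic) {z : ℂ} (hz : z ∈ Rf g) (Pc : ℂ[X]) :
    AdjoinRoot.mk (gc g) Pc * AdjoinRoot.mk (gc g) (L g z) =
      Pc.eval z • AdjoinRoot.mk (gc g) (L g z) := by
  rw [AdjoinRoot.smul_mk, ← map_mul, AdjoinRoot.mk_eq_mk]
  obtain ⟨k, hk⟩ : (X - C z) ∣ (Pc - C (Pc.eval z)) := dvd_iff_isRoot.mpr (by simp)
  have hrw : Pc * L g z - Pc.eval z • L g z = (Pc - C (Pc.eval z)) * L g z := by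
    rw [smul_eq_C_mul]; ring
  exact ⟨k * C (((gc g).derivative.eval z)⁻¹), by
    rw [hrw, hk, mul_comm (X - C z) k, mul_assoc, L_mul hg hz]; ring⟩

lemma li_L (hg : g.Monic) (hsf : Squarefree g) :
    LinearIndependent ℂ (fun z : ↥(Rf g) => AdjoinRoot.mk (gc g) (L g ↑z)) := by
  rw [linearIndependent_iff']
  intro s c hsum j hj
  have hmk : AdjoinRoot.mk (gc g) (∑ i ∈ s, c i • L g ↑i) = 0 := by
    rw [map_sum]
    simpa [AdjoinRoot.smul_mk] using hsum
  rw [AdjoinRoot.mk_eq_zero] at hmk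
  obtain ⟨k, hk⟩ := hmk
  have heval := congrArg (Polynomial.eval (↑j : ℂ)) hk
  rw [eval_mul, (mem_Rf hg).mp j.2, zero_mul, eval_finset_sum] at heval
  rw [Finset.sum_eq_single j (fun i _ hij => by
    have hne : (↑j : ℂ) ≠ ↑i := fun hc => hij (Subtype.coe_injective hc.symm)
    simp [smul_eq_C_mul, eval_L hg hsf i.2 j.2, hne]) (fun hj' => (hj' hj).elim)] at heval
  simpa [smul_eq_C_mul, eval_L hg hsf j.2 j.2] using heval

lemma traceB (hg : g.Monic) (hsf : Squarefree g) (hn : g.natDegree ≠ 0) (Pc : ℂ[X]) :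
    Algebra.trace ℂ (AdjoinRoot (gc g)) (AdjoinRoot.mk (gc g) Pc) = ∑ z ∈ Rf g, Pc.eval z := by
  classical
  haveI : Module.Finite ℂ (AdjoinRoot (gc g)) :=
    Module.Finite.of_basis (AdjoinRoot.powerBasisAux' (gc_monic hg))
  have hfr : Module.finrank ℂ (AdjoinRoot (gc g)) = g.natDegree := by
    simpa [gc_natDegree] using (AdjoinRoot.powerBasis' (gc_monic hg)).finrank
  haveI : Nonempty ↥(Rf g) := by
    obtain ⟨x, hx⟩ := Finset.card_pos.mp
      (by rw [card_Rf hg hsf]; exact Nat.pos_of_ne_zero hn : 0 < (Rf g).card)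
    exact ⟨⟨x, hx⟩⟩
  have hcard : Fintype.card ↥(Rf g) = Module.finrank ℂ (AdjoinRoot (gc g)) := by
    rw [Fintype.card_coe, card_Rf hg hsf, hfr]
  set bL := basisOfLinearIndependentOfCardEqFinrank (li_L hg hsf) hcard with hbL
  have hcoe : ∀ z : ↥(Rf g), bL z = AdjoinRoot.mk (gc g) (L g ↑z) := by
    intro z
    rw [hbL, coe_basisOfLinearIndependentOfCardEqFinrank]
  rw [Algebra.trace_eq_matrix_trace bL, Matrix.trace]
  conv_rhs => rw [← Finset.sum_coe_sort (Rf g)]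
  refine Finset.sum_congr rfl fun z _ => ?_
  simp only [Matrix.diag]
  rw [Algebra.leftMulMatrix_eq_repr_mul, hcoe z, L_smul hg z.2, ← hcoe z, map_smul,
    Module.Basis.repr_self]
  simp

lemma trace_formula (hg : g.Monic) (hsf : Squarefree g) (F : ℝ[X]) :
    algebraMap ℝ ℂ (Algebra.trace ℝ (Polynomial ℝ ⧸ Ideal.span {g})
        (Ideal.Quotient.mk (Ideal.span {g}) F))
      = ∑ z ∈ Rf g, (F.map (algebraMap ℝ ℂ)).eval z := by
  by_cases hn : g.natDegree = 0
  · have hRf : Rf g = ∅ := Finset.card_eq_zero.mp (by rw [card_Rf hg hsf, hn])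
    rw [hRf, Finset.sum_empty]
    have htr : Algebra.trace ℝ (AdjoinRoot g) (AdjoinRoot.mk g F) = 0 := by
      classical
      rw [Algebra.trace_eq_matrix_trace (AdjoinRoot.powerBasisAux' hg), Matrix.trace]
      haveI : IsEmpty (Fin g.natDegree) := by rw [hn]; infer_instance
      simp
    show algebraMap ℝ ℂ (Algebra.trace ℝ (AdjoinRoot g) (AdjoinRoot.mk g F)) = 0
    rw [htr, map_zero]
  · show algebraMap ℝ ℂ (Algebra.trace ℝ (AdjoinRoot g) (AdjoinRoot.mk g F)) = _
    rw [← trace_psi hg, ψ_mk, traceB hg hsf hn]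

end TraceFormula


section Form
variable (H : ℝ[X])

lemma 𝔠_conj (z : ℂ) : 𝔠 H ((starRingEnd ℂ) z) = (starRingEnd ℂ) (𝔠 H z) := eval_conj H z

lemma 𝔠_real {z : ℂ} (hz : z.im = 0) : 𝔠 H z = ((H.eval z.re : ℝ) : ℂ) := by
  have hzr : ((z.re : ℝ) : ℂ) = z := Complex.conj_eq_iff_re.mp (Complex.conj_eq_iff_im.mpr hz)
  calc 𝔠 H z = (H.map (algebraMap ℝ ℂ)).eval ((z.re : ℝ) : ℂ) := by rw [𝔠, hzr]
  _ = _ := eval_ofReal H z.re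

def ω (z : ℂ) : ℂ :=
  if h : 𝔠 H z = 0 then 1
  else (IsAlgClosed.exists_pow_nat_eq
    (((‖𝔠 H z‖ : ℂ))⁻¹ * (starRingEnd ℂ) (𝔠 H z)) two_pos).choose

lemma ω_sq {z : ℂ} (h : 𝔠 H z ≠ 0) :
    ω H z ^ 2 = ((‖𝔠 H z‖ : ℂ))⁻¹ * (starRingEnd ℂ) (𝔠 H z) := by
  rw [ω, dif_neg h]
  exact (IsAlgClosed.exists_pow_nat_eq _ two_pos).choose_spec

lemma ω_mul_c {z : ℂ} (h : 𝔠 H z ≠ 0) :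
    ω H z ^ 2 * 𝔠 H z = (‖𝔠 H z‖ : ℂ) := by
  have habs : (‖𝔠 H z‖ : ℂ) ≠ 0 := by
    simp only [ne_eq, Complex.ofReal_eq_zero]
    exact norm_ne_zero_iff.mpr h
  have h2 : (starRingEnd ℂ) (𝔠 H z) * 𝔠 H z = (‖𝔠 H z‖ : ℂ) ^ 2 := by
    rw [mul_comm, Complex.mul_conj, Complex.normSq_eq_norm_sq]
    push_cast
    ring
  rw [ω_sq H h, mul_assoc, h2, sq, ← mul_assoc, inv_mul_cancel₀ habs, one_mul]

lemma ω_conj_mul_c {z : ℂ} (h : 𝔠 H z ≠ 0) :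
    (starRingEnd ℂ) (ω H z) ^ 2 * (starRingEnd ℂ) (𝔠 H z) = (‖𝔠 H z‖ : ℂ) := by
  have := congrArg (starRingEnd ℂ) (ω_mul_c H h)
  simpa [map_mul, map_pow, Complex.conj_ofReal] using this

lemma ω_ne (z : ℂ) : ω H z ≠ 0 := by
  by_cases h : 𝔠 H z = 0
  · rw [ω, dif_pos h]; exact one_ne_zero
  · intro h0
    have habs : (‖𝔠 H z‖ : ℂ) ≠ 0 := by
      simp only [ne_eq, Complex.ofReal_eq_zero]
      exact norm_ne_zero_iff.mpr h
    have hmc := ω_mul_c H h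
    rw [h0] at hmc
    apply habs
    rw [← hmc]; ring

def α (z : ℂ) : ℂ :=
  if z.im = 0 then 1 else if 0 < z.im then ω H z
  else -(Complex.I * (starRingEnd ℂ) (ω H ((starRingEnd ℂ) z)))

def β (z : ℂ) : ℂ :=
  if z.im = 0 then 0 else if 0 < z.im then (starRingEnd ℂ) (ω H z)
  else Complex.I * ω H ((starRingEnd ℂ) z)

lemma α_real {z : ℂ} (h : z.im = 0) : α H z = 1 := by rw [α, if_pos h]
lemma β_real {z : ℂ} (h : z.im = 0) : β H z = 0 := by rw [β, if_pos h]
lemma α_pos {z : ℂ} (h : 0 < z.im) : α H z = ω H z := by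
  rw [α, if_neg (by linarith), if_pos h]
lemma β_pos {z : ℂ} (h : 0 < z.im) : β H z = (starRingEnd ℂ) (ω H z) := by
  rw [β, if_neg (by linarith), if_pos h]
lemma α_neg {z : ℂ} (h : z.im < 0) :
    α H z = -(Complex.I * (starRingEnd ℂ) (ω H ((starRingEnd ℂ) z))) := by
  rw [α, if_neg (by linarith), if_neg (by linarith)]
lemma β_neg {z : ℂ} (h : z.im < 0) : β H z = Complex.I * ω H ((starRingEnd ℂ) z) := by
  rw [β, if_neg (by linarith), if_neg (by linarith)]

lemma conj_α {z : ℂ} (hz : z.im ≠ 0) : (starRingEnd ℂ) (α H z) = β H z := by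
  rcases hz.lt_or_gt with h | h
  · rw [α_neg H h, β_neg H h, map_neg, map_mul, Complex.conj_I, Complex.conj_conj]
    ring
  · rw [α_pos H h, β_pos H h]

lemma conj_β {z : ℂ} (hz : z.im ≠ 0) : (starRingEnd ℂ) (β H z) = α H z := by
  rcases hz.lt_or_gt with h | h
  · rw [α_neg H h, β_neg H h, map_mul, Complex.conj_I]
    ring
  · rw [α_pos H h, β_pos H h, Complex.conj_conj]

variable (g : ℝ[X])

def P (z : ℂ) : ℂ[X] := C (α H z) * L g z + C (β H z) * L g ((starRingEnd ℂ) z)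

def ee (z : ℂ) : Polynomial ℝ ⧸ Ideal.span {g} := Ideal.Quotient.mk _ (realify (P H g z))

def dd (z : ℂ) : ℝ :=
  if z.im = 0 then H.eval z.re else if 0 < z.im then 2 * ‖𝔠 H z‖
  else -(2 * ‖𝔠 H z‖)

lemma conj_P (z : ℂ) : (P H g z).map (starRingEnd ℂ) = P H g z := by
  by_cases hz : z.im = 0
  · have hcz : (starRingEnd ℂ) z = z := Complex.conj_eq_iff_im.mpr hz
    rw [P, Polynomial.map_add, Polynomial.map_mul, Polynomial.map_mul, map_C, map_C,
      conj_L, conj_L, hcz, α_real H hz, β_real H hz]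
    simp
  · rw [P, Polynomial.map_add, Polynomial.map_mul, Polynomial.map_mul, map_C, map_C,
      conj_L, conj_L, conj_α H hz, conj_β H hz, Complex.conj_conj]
    ring

variable {g H}

lemma eval_P (hg : g.Monic) (hsf : Squarefree g) {z w : ℂ} (hz : z ∈ Rf g) (hw : w ∈ Rf g) :
    (P H g z).eval w = α H z * (if w = z then 1 else 0)
      + β H z * (if w = (starRingEnd ℂ) z then 1 else 0) := by
  rw [P, eval_add, eval_mul, eval_mul, eval_C, eval_C,
    eval_L hg hsf hz hw, eval_L hg hsf (conj_mem_Rf hg hz) hw]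

end Form

section Orth
variable {g H : ℝ[X]}
variable {Φ : (Polynomial ℝ ⧸ Ideal.span {g}) →ₗ[ℝ] (Polynomial ℝ ⧸ Ideal.span {g}) →ₗ[ℝ] ℝ}
variable {h : Polynomial ℝ ⧸ Ideal.span {g}}

lemma algebraMap_complex (x : ℝ) : algebraMap ℝ ℂ x = (x : ℂ) := rfl

lemma Phi_eval (hg : g.Monic) (hsf : Squarefree g)
    (hh : h = Ideal.Quotient.mk (Ideal.span {g}) H)
    (hΦ : ∀ f f' : Polynomial ℝ ⧸ Ideal.span {g},
      Φ f f' = Algebra.traceForm ℝ (Polynomial ℝ ⧸ Ideal.span {g}) (h * f) f')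
    (F F' : ℝ[X]) :
    algebraMap ℝ ℂ (Φ (Ideal.Quotient.mk (Ideal.span {g}) F)
        (Ideal.Quotient.mk (Ideal.span {g}) F')) =
      ∑ t ∈ Rf g, 𝔠 H t * ((F.map (algebraMap ℝ ℂ)).eval t *
        ((F'.map (algebraMap ℝ ℂ)).eval t)) := by
  rw [hΦ, Algebra.traceForm_apply, hh, ← map_mul, ← map_mul, trace_formula hg hsf]
  refine Finset.sum_congr rfl fun t ht => ?_
  rw [Polynomial.map_mul, Polynomial.map_mul, eval_mul, eval_mul, 𝔠, mul_assoc]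

lemma sum_delta (hg : g.Monic) {u : ℂ} (hu : u ∈ Rf g) (v x y : ℂ) :
    ∑ t ∈ Rf g, 𝔠 H t * ((x * (if t = u then 1 else 0)) * (y * (if t = v then 1 else 0)))
      = x * y * (if u = v then 𝔠 H u else 0) := by
  rw [Finset.sum_eq_single u (fun t _ htu => by simp [htu]) (fun hu' => (hu' hu).elim)]
  by_cases h : u = v <;> simp [h] <;> ring

lemma orth (hg : g.Monic) (hsf : Squarefree g)
    (hh : h = Ideal.Quotient.mk (Ideal.span {g}) H)
    (hΦ : ∀ f f' : Polynomial ℝ ⧸ Ideal.span {g},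
      Φ f f' = Algebra.traceForm ℝ (Polynomial ℝ ⧸ Ideal.span {g}) (h * f) f')
    {z w : ℂ} (hz : z ∈ Rf g) (hw : w ∈ Rf g) :
    algebraMap ℝ ℂ (Φ (ee H g z) (ee H g w)) =
      α H z * α H w * (if z = w then 𝔠 H z else 0)
      + α H z * β H w * (if z = (starRingEnd ℂ) w then 𝔠 H z else 0)
      + β H z * α H w * (if (starRingEnd ℂ) z = w then 𝔠 H ((starRingEnd ℂ) z) else 0)
      + β H z * β H w * (if (starRingEnd ℂ) z = (starRingEnd ℂ) w
          then 𝔠 H ((starRingEnd ℂ) z) else 0) := by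
  rw [ee, ee, Phi_eval hg hsf hh hΦ]
  rw [realify_map (conj_P H g z), realify_map (conj_P H g w)]
  have expand : ∀ t ∈ Rf g,
      𝔠 H t * ((P H g z).eval t * (P H g w).eval t)
        = 𝔠 H t * ((α H z * (if t = z then 1 else 0)) * (α H w * (if t = w then 1 else 0)))
        + 𝔠 H t * ((α H z * (if t = z then 1 else 0)) *
            (β H w * (if t = (starRingEnd ℂ) w then 1 else 0)))
        + 𝔠 H t * ((β H z * (if t = (starRingEnd ℂ) z then 1 else 0)) *
            (α H w * (if t = w then 1 else 0)))
        + 𝔠 H t * ((β H z * (if t = (starRingEnd ℂ) z then 1 else 0)) *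
            (β H w * (if t = (starRingEnd ℂ) w then 1 else 0))) := by
    intro t ht
    rw [eval_P hg hsf hz ht, eval_P hg hsf hw ht]
    ring
  rw [Finset.sum_congr rfl expand, Finset.sum_add_distrib, Finset.sum_add_distrib,
    Finset.sum_add_distrib, sum_delta hg hz, sum_delta hg hz,
    sum_delta hg (conj_mem_Rf hg hz), sum_delta hg (conj_mem_Rf hg hz)]

lemma Phi_ee (hg : g.Monic) (hsf : Squarefree g)
    (hh : h = Ideal.Quotient.mk (Ideal.span {g}) H)
    (hΦ : ∀ f f' : Polynomial ℝ ⧸ Ideal.span {g},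
      Φ f f' = Algebra.traceForm ℝ (Polynomial ℝ ⧸ Ideal.span {g}) (h * f) f')
    {z w : ℂ} (hz : z ∈ Rf g) (hw : w ∈ Rf g) :
    Φ (ee H g z) (ee H g w) = if z = w then dd H z else 0 := by
  apply (algebraMap ℝ ℂ).injective
  rw [orth hg hsf hh hΦ hz hw]
  by_cases hzw : z = w
  · subst hzw
    rw [if_pos rfl, if_pos rfl]
    by_cases him : z.im = 0
    · have hcz : (starRingEnd ℂ) z = z := Complex.conj_eq_iff_im.mpr him
      rw [α_real H him, β_real H him, hcz, if_pos rfl, if_pos rfl,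
        dd, if_pos him, 𝔠_real H him, algebraMap_complex]
      ring
    · have hne : (starRingEnd ℂ) z ≠ z := fun hc => him (Complex.conj_eq_iff_im.mp hc)
      rw [if_neg (fun hc => hne hc.symm), if_neg hne, if_pos rfl]
      by_cases hc : 𝔠 H z = 0
      · have hc' : 𝔠 H ((starRingEnd ℂ) z) = 0 := by rw [𝔠_conj, hc, map_zero]
        have hdd : dd H z = 0 := by
          rw [dd, if_neg him]; split_ifs <;> simp [hc]
        rw [hc, hc', hdd]
        simp
      · have hc' : 𝔠 H ((starRingEnd ℂ) z) ≠ 0 := by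
          rw [𝔠_conj]; simpa using hc
        rcases (Ne.lt_or_gt him : z.im < 0 ∨ 0 < z.im) with hlt | hgt
        · have h1 := ω_mul_c H hc'
          have h2 := ω_conj_mul_c H hc'
          have hc2 : 𝔠 H z = (starRingEnd ℂ) (𝔠 H ((starRingEnd ℂ) z)) := by
            rw [𝔠_conj, Complex.conj_conj]
          have habs : ‖𝔠 H z‖ = ‖𝔠 H ((starRingEnd ℂ) z)‖ := by
            conv_lhs => rw [hc2]
            rw [Complex.norm_conj]
          rw [α_neg H hlt, β_neg H hlt, hc2, dd, if_neg him, if_neg (not_lt.mpr hlt.le),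
            habs, algebraMap_complex]
          push_cast
          linear_combination ((starRingEnd ℂ) (ω H ((starRingEnd ℂ) z)) ^ 2 *
            (starRingEnd ℂ) (𝔠 H ((starRingEnd ℂ) z)) +
            ω H ((starRingEnd ℂ) z) ^ 2 * 𝔠 H ((starRingEnd ℂ) z)) * Complex.I_sq - h1 - h2
        · have h1 := ω_mul_c H hc
          have h2 := ω_conj_mul_c H hc
          rw [α_pos H hgt, β_pos H hgt, 𝔠_conj, dd, if_neg him, if_pos hgt,
            algebraMap_complex]
          push_cast
          linear_combination h1 + h2
  · rw [if_neg hzw, if_neg hzw, map_zero]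
    by_cases hwz : w = (starRingEnd ℂ) z
    · subst hwz
      have hne : z ≠ (starRingEnd ℂ) z := hzw
      have hne' : (starRingEnd ℂ) z ≠ z := fun hc => hne hc.symm
      have him : z.im ≠ 0 := fun h0 => hne (Complex.conj_eq_iff_im.mpr h0).symm
      have e2 : (if z = (starRingEnd ℂ) ((starRingEnd ℂ) z) then 𝔠 H z else 0) = 𝔠 H z :=
        if_pos (by rw [Complex.conj_conj])
      have e3 : (if (starRingEnd ℂ) z = (starRingEnd ℂ) z then 𝔠 H ((starRingEnd ℂ) z) else 0)
          = 𝔠 H ((starRingEnd ℂ) z) := if_pos rfl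
      have e4 : (if (starRingEnd ℂ) z = (starRingEnd ℂ) ((starRingEnd ℂ) z)
          then 𝔠 H ((starRingEnd ℂ) z) else 0) = 0 :=
        if_neg (by rw [Complex.conj_conj]; exact hne')
      rw [e2, e3, e4]
      by_cases hc : 𝔠 H z = 0
      · have hc' : 𝔠 H ((starRingEnd ℂ) z) = 0 := by rw [𝔠_conj, hc, map_zero]
        rw [hc, hc']
        ring
      · have hc' : 𝔠 H ((starRingEnd ℂ) z) ≠ 0 := by
          rw [𝔠_conj]; simpa using hc
        have hcim : ((starRingEnd ℂ) z).im = -z.im := Complex.conj_im z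
        rcases (Ne.lt_or_gt him : z.im < 0 ∨ 0 < z.im) with hlt | hgt
        · have hgt' : 0 < ((starRingEnd ℂ) z).im := by rw [hcim]; linarith
          have hc2 : 𝔠 H z = (starRingEnd ℂ) (𝔠 H ((starRingEnd ℂ) z)) := by
            rw [𝔠_conj, Complex.conj_conj]
          rw [α_neg H hlt, β_neg H hlt, α_pos H hgt', β_pos H hgt', hc2]
          have h1 := ω_mul_c H hc'
          have h2 := ω_conj_mul_c H hc'
          linear_combination Complex.I * h1 - Complex.I * h2
        · have hlt' : ((starRingEnd ℂ) z).im < 0 := by rw [hcim]; linarith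
          rw [α_pos H hgt, β_pos H hgt, α_neg H hlt', β_neg H hlt']
          simp only [Complex.conj_conj]
          rw [𝔠_conj]
          have h1 := ω_mul_c H hc
          have h2 := ω_conj_mul_c H hc
          linear_combination Complex.I * h1 - Complex.I * h2
    · have h1 : ¬ (z = (starRingEnd ℂ) w) := fun hc => hwz (by rw [hc, Complex.conj_conj])
      have h2 : ¬ ((starRingEnd ℂ) z = w) := fun hc => hwz hc.symm
      have h3 : ¬ ((starRingEnd ℂ) z = (starRingEnd ℂ) w) :=
        fun hc => hzw ((starRingEnd ℂ).injective hc)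
      rw [if_neg h1, if_neg h2, if_neg h3]
      ring

lemma li_ee (hg : g.Monic) (hsf : Squarefree g) :
    LinearIndependent ℝ (fun z : ↥(Rf g) => ee H g ↑z) := by
  rw [Fintype.linearIndependent_iff]
  intro c hsum j
  have hmk : AdjoinRoot.mk g (∑ i : ↥(Rf g), c i • realify (P H g ↑i)) = 0 := by
    rw [map_sum]
    exact hsum
  rw [AdjoinRoot.mk_eq_zero] at hmk
  obtain ⟨k, hk⟩ := hmk
  have hkc : mapRingHom (algebraMap ℝ ℂ) (∑ i : ↥(Rf g), c i • realify (P H g ↑i))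
      = gc g * (k.map (algebraMap ℝ ℂ)) := by
    rw [hk]
    simp only [coe_mapRingHom, Polynomial.map_mul, gc_def]
  rw [map_sum] at hkc
  have heval := congrArg (Polynomial.eval (↑j : ℂ)) hkc
  rw [eval_mul, (mem_Rf hg).mp j.2, zero_mul, eval_finset_sum] at heval
  have hterm : ∀ i : ↥(Rf g),
      ((mapRingHom (algebraMap ℝ ℂ)) (c i • realify (P H g ↑i))).eval (↑j : ℂ)
        = ((c i : ℝ) : ℂ) * α H ↑i * (if (↑j : ℂ) = ↑i then 1 else 0)
          + ((c i : ℝ) : ℂ) * β H ↑i * (if (↑j : ℂ) = (starRingEnd ℂ) ↑i then 1 else 0) := by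
    intro i
    have hs : c i • realify (P H g ↑i) = C (c i) * realify (P H g ↑i) := smul_eq_C_mul _
    rw [coe_mapRingHom, hs, Polynomial.map_mul, map_C, realify_map (conj_P H g ↑i),
      eval_mul, eval_C, eval_P hg hsf i.2 j.2, algebraMap_complex]
    ring
  rw [Finset.sum_congr rfl (fun i _ => hterm i), Finset.sum_add_distrib] at heval
  set jc : ↥(Rf g) := ⟨(starRingEnd ℂ) ↑j, conj_mem_Rf hg j.2⟩ with hjc
  have hjcc : (↑jc : ℂ) = (starRingEnd ℂ) ↑j := by rw [hjc]
  have hS1 : ∑ i : ↥(Rf g), ((c i : ℝ) : ℂ) * α H ↑i * (if (↑j : ℂ) = ↑i then 1 else 0)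
      = ((c j : ℝ) : ℂ) * α H ↑j := by
    rw [Finset.sum_eq_single j (fun i _ hij => by
        rw [if_neg (fun hcc => hij (Subtype.coe_injective hcc.symm)), mul_zero])
      (fun hj' => (hj' (Finset.mem_univ j)).elim), if_pos rfl, mul_one]
  have hS2 : ∑ i : ↥(Rf g), ((c i : ℝ) : ℂ) * β H ↑i *
        (if (↑j : ℂ) = (starRingEnd ℂ) ↑i then 1 else 0)
      = ((c jc : ℝ) : ℂ) * β H ↑jc := by
    rw [Finset.sum_eq_single jc (fun i _ hij => by
        have hne : ¬ ((↑j : ℂ) = (starRingEnd ℂ) ↑i) := by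
          intro hcc
          apply hij
          apply Subtype.coe_injective
          show (↑i : ℂ) = (↑jc : ℂ)
          rw [hjcc, hcc, Complex.conj_conj]
        rw [if_neg hne, mul_zero])
      (fun hj' => (hj' (Finset.mem_univ jc)).elim)]
    have hcond : (↑j : ℂ) = (starRingEnd ℂ) ↑jc := by rw [hjcc, Complex.conj_conj]
    rw [if_pos hcond, mul_one]
  rw [hS1, hS2] at heval
  by_cases him : (↑j : ℂ).im = 0
  · have hjcim : ((starRingEnd ℂ) (↑j : ℂ)).im = 0 := by rw [Complex.conj_im, him, neg_zero]
    rw [α_real H him, hjcc, β_real H hjcim, mul_one, mul_zero, add_zero] at heval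
    exact_mod_cast heval
  · rcases (Ne.lt_or_gt him : (↑j : ℂ).im < 0 ∨ 0 < (↑j : ℂ).im) with hlt | hgt
    · have hgt' : 0 < ((starRingEnd ℂ) (↑j : ℂ)).im := by rw [Complex.conj_im]; linarith
      rw [hjcc, α_neg H hlt, β_pos H hgt'] at heval
      have hfac : (starRingEnd ℂ) (ω H ((starRingEnd ℂ) (↑j : ℂ))) *
          (((c jc : ℝ) : ℂ) - ((c j : ℝ) : ℂ) * Complex.I) = 0 := by
        linear_combination heval
      have hω : (starRingEnd ℂ) (ω H ((starRingEnd ℂ) (↑j : ℂ))) ≠ 0 := by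
        simpa using ω_ne H ((starRingEnd ℂ) (↑j : ℂ))
      have hzero := (mul_eq_zero.mp hfac).resolve_left hω
      have him2 := congrArg Complex.im hzero
      simpa using him2
    · have hlt' : ((starRingEnd ℂ) (↑j : ℂ)).im < 0 := by rw [Complex.conj_im]; linarith
      rw [hjcc, α_pos H hgt, β_neg H hlt', Complex.conj_conj] at heval
      have hfac : ω H (↑j : ℂ) *
          (((c j : ℝ) : ℂ) + ((c jc : ℝ) : ℂ) * Complex.I) = 0 := by
        linear_combination heval
      have hzero := (mul_eq_zero.mp hfac).resolve_left (ω_ne H _)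
      have hre := congrArg Complex.re hzero
      simpa using hre

end Orth

section Spans
variable {g H : ℝ[X]}
variable {Φ : (Polynomial ℝ ⧸ Ideal.span {g}) →ₗ[ℝ] (Polynomial ℝ ⧸ Ideal.span {g}) →ₗ[ℝ] ℝ}
variable {h : Polynomial ℝ ⧸ Ideal.span {g}}

/-- span of the `ee z` for `z ∈ S` -/
def Wsub (H g : ℝ[X]) (S : Finset ℂ) : Submodule ℝ (Polynomial ℝ ⧸ Ideal.span {g}) :=
  Submodule.span ℝ (Set.range fun z : ↥S => ee H g ↑z)

lemma finrank_Wsub (hg : g.Monic) (hsf : Squarefree g) {S : Finset ℂ} (hS : S ⊆ Rf g) :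
    Module.finrank ℝ (Wsub H g S) = S.card := by
  have li' : LinearIndependent ℝ (fun z : ↥S => ee H g ↑z) :=
    (li_ee (H := H) hg hsf).comp (fun z : ↥S => (⟨↑z, hS z.2⟩ : ↥(Rf g)))
      (fun a b hab => by
        apply Subtype.ext
        have h2 := congrArg Subtype.val hab
        simpa using h2)
  rw [Wsub, finrank_span_eq_card li', Fintype.card_coe]

lemma quad_Wsub (hg : g.Monic) (hsf : Squarefree g)
    (hh : h = Ideal.Quotient.mk (Ideal.span {g}) H)
    (hΦ : ∀ f f' : Polynomial ℝ ⧸ Ideal.span {g},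
      Φ f f' = Algebra.traceForm ℝ (Polynomial ℝ ⧸ Ideal.span {g}) (h * f) f')
    {S : Finset ℂ} (hS : S ⊆ Rf g) {x : Polynomial ℝ ⧸ Ideal.span {g}}
    (hx : x ∈ Wsub H g S) :
    ∃ cc : ↥S → ℝ, x = ∑ z : ↥S, cc z • ee H g ↑z ∧
      Φ x x = ∑ z : ↥S, (cc z)^2 * dd H ↑z := by
  obtain ⟨cc, hcc⟩ := (Submodule.mem_span_range_iff_exists_fun ℝ).mp hx
  refine ⟨cc, hcc.symm, ?_⟩
  rw [← hcc]
  simp only [map_sum, map_smul, LinearMap.sum_apply, LinearMap.smul_apply, smul_eq_mul]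
  refine Finset.sum_congr rfl fun z _ => ?_
  rw [Finset.sum_eq_single z (fun w _ hwz => by
      rw [Phi_ee hg hsf hh hΦ (hS w.2) (hS z.2),
        if_neg (fun hc => hwz (Subtype.coe_injective hc)), mul_zero])
    (fun hz' => (hz' (Finset.mem_univ z)).elim)]
  rw [Phi_ee hg hsf hh hΦ (hS z.2) (hS z.2), if_pos rfl]
  ring

end Spans

section Counting
variable {g H : ℝ[X]}

lemma count_pos_split (hg : g.Monic) (hsf : Squarefree g) :
    ((Rf g).filter (fun z => 0 < dd H z)).card
      = ((Rf g).filter (fun z => z.im = 0 ∧ 0 < H.eval z.re)).card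
        + ((Rf g).filter (fun z => 0 < z.im ∧ 𝔠 H z ≠ 0)).card := by
  have hset : (Rf g).filter (fun z => 0 < dd H z)
      = ((Rf g).filter (fun z => (z.im = 0 ∧ 0 < H.eval z.re) ∨ (0 < z.im ∧ 𝔠 H z ≠ 0))) := by
    refine Finset.filter_congr fun z hz => ?_
    rcases lt_trichotomy z.im 0 with hlt | heq | hgt
    · simp only [dd, if_neg (ne_of_lt hlt), if_neg (not_lt.mpr (le_of_lt hlt))]
      have habs := norm_nonneg (𝔠 H z)
      constructor
      · intro hdd; linarith
      · rintro (⟨h0, _⟩ | ⟨h0, _⟩) <;> linarith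
    · simp only [dd, if_pos heq]
      constructor
      · intro hdd; exact Or.inl ⟨heq, hdd⟩
      · rintro (⟨_, h2⟩ | ⟨h1, _⟩)
        · exact h2
        · linarith
    · simp only [dd, if_neg (ne_of_gt hgt), if_pos hgt]
      constructor
      · intro hdd
        refine Or.inr ⟨hgt, fun hc0 => ?_⟩
        rw [hc0] at hdd
        simp at hdd
      · rintro (⟨h0, _⟩ | ⟨_, hc⟩)
        · linarith
        · have := norm_pos_iff.mpr hc
          linarith
  rw [hset, Finset.filter_or, Finset.card_union_of_disjoint]
  exact Finset.disjoint_left.mpr fun z h1 h2 => by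
    have e1 := (Finset.mem_filter.mp h1).2.1
    have e2 := (Finset.mem_filter.mp h2).2.1
    linarith

lemma count_neg_split (hg : g.Monic) (hsf : Squarefree g) :
    ((Rf g).filter (fun z => dd H z < 0)).card
      = ((Rf g).filter (fun z => z.im = 0 ∧ H.eval z.re < 0)).card
        + ((Rf g).filter (fun z => z.im < 0 ∧ 𝔠 H z ≠ 0)).card := by
  have hset : (Rf g).filter (fun z => dd H z < 0)
      = ((Rf g).filter (fun z => (z.im = 0 ∧ H.eval z.re < 0) ∨ (z.im < 0 ∧ 𝔠 H z ≠ 0))) := by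
    refine Finset.filter_congr fun z hz => ?_
    rcases lt_trichotomy z.im 0 with hlt | heq | hgt
    · simp only [dd, if_neg (ne_of_lt hlt), if_neg (not_lt.mpr (le_of_lt hlt))]
      constructor
      · intro hdd
        refine Or.inr ⟨hlt, fun hc0 => ?_⟩
        rw [hc0] at hdd
        simp at hdd
      · rintro (⟨h0, _⟩ | ⟨_, hc⟩)
        · linarith
        · have := norm_pos_iff.mpr hc
          linarith
    · simp only [dd, if_pos heq]
      constructor
      · intro hdd; exact Or.inl ⟨heq, hdd⟩
      · rintro (⟨_, h2⟩ | ⟨h1, _⟩)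
        · exact h2
        · linarith
    · simp only [dd, if_neg (ne_of_gt hgt), if_pos hgt]
      have habs := norm_nonneg (𝔠 H z)
      constructor
      · intro hdd; linarith
      · rintro (⟨h0, _⟩ | ⟨h0, _⟩) <;> linarith
  rw [hset, Finset.filter_or, Finset.card_union_of_disjoint]
  exact Finset.disjoint_left.mpr fun z h1 h2 => by
    have e1 := (Finset.mem_filter.mp h1).2.1
    have e2 := (Finset.mem_filter.mp h2).2.1
    linarith

lemma count_conj_pair (hg : g.Monic) :
    ((Rf g).filter (fun z => 0 < z.im ∧ 𝔠 H z ≠ 0)).card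
      = ((Rf g).filter (fun z => z.im < 0 ∧ 𝔠 H z ≠ 0)).card := by
  apply Finset.card_bij (fun z _ => (starRingEnd ℂ) z)
  · intro a ha
    obtain ⟨haR, him, hc⟩ : a ∈ Rf g ∧ 0 < a.im ∧ 𝔠 H a ≠ 0 := by
      simpa [Finset.mem_filter, and_assoc] using ha
    refine Finset.mem_filter.mpr ⟨conj_mem_Rf hg haR, ?_, ?_⟩
    · rw [Complex.conj_im]; linarith
    · rw [𝔠_conj]; simpa using hc
  · intro a _ b _ hab
    exact (starRingEnd ℂ).injective hab
  · intro b hb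
    obtain ⟨hbR, him, hc⟩ : b ∈ Rf g ∧ b.im < 0 ∧ 𝔠 H b ≠ 0 := by
      simpa [Finset.mem_filter, and_assoc] using hb
    refine ⟨(starRingEnd ℂ) b, Finset.mem_filter.mpr ⟨conj_mem_Rf hg hbR, ?_, ?_⟩, ?_⟩
    · rw [Complex.conj_im]; linarith
    · rw [𝔠_conj]; simpa using hc
    · rw [Complex.conj_conj]

lemma count_real (hg : g.Monic) (hsf : Squarefree g) (pred : ℝ → Prop) [DecidablePred pred] :
    ((Rf g).filter (fun z => z.im = 0 ∧ pred (H.eval z.re))).card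
      = Multiset.card (g.roots.filter (fun a => pred (H.eval a))) := by
  rw [← Multiset.toFinset_card_of_nodup ((nodup_roots (sep hsf)).filter _),
    Multiset.toFinset_filter]
  apply Finset.card_bij (fun z _ => z.re)
  · intro z hzm
    obtain ⟨hzR, him, hpred⟩ : z ∈ Rf g ∧ z.im = 0 ∧ pred (H.eval z.re) := by
      simpa [Finset.mem_filter, and_assoc] using hzm
    have hzr : ((z.re : ℝ) : ℂ) = z := Complex.conj_eq_iff_re.mp (Complex.conj_eq_iff_im.mpr him)
    refine Finset.mem_filter.mpr ⟨Multiset.mem_toFinset.mpr ?_, hpred⟩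
    rw [mem_roots hg.ne_zero]
    have h0 : (gc g).eval z = 0 := (mem_Rf hg).mp hzR
    rw [← hzr, gc_def, eval_ofReal] at h0
    exact_mod_cast h0
  · intro a ham b hbm hab
    obtain ⟨_, hima, _⟩ : a ∈ Rf g ∧ a.im = 0 ∧ pred (H.eval a.re) := by
      simpa [Finset.mem_filter, and_assoc] using ham
    obtain ⟨_, himb, _⟩ : b ∈ Rf g ∧ b.im = 0 ∧ pred (H.eval b.re) := by
      simpa [Finset.mem_filter, and_assoc] using hbm
    exact Complex.ext hab (by rw [hima, himb])
  · intro a ham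
    obtain ⟨haroot, hpred⟩ := Finset.mem_filter.mp ham
    rw [Multiset.mem_toFinset, mem_roots hg.ne_zero] at haroot
    refine ⟨(a : ℂ), Finset.mem_filter.mpr ⟨?_, by simp, by simpa using hpred⟩, by simp⟩
    rw [mem_Rf hg, gc_def, eval_ofReal]
    exact_mod_cast haroot

lemma count_rank (hg : g.Monic) (hsf : Squarefree g) :
    ((Rf g).filter (fun z => 0 < dd H z)).card + ((Rf g).filter (fun z => dd H z < 0)).card
      = Multiset.card ((gc g).roots.filter (fun z => 𝔠 H z ≠ 0)) := by
  rw [← Multiset.toFinset_card_of_nodup ((nodup_Rf hsf).filter _), Multiset.toFinset_filter]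
  rw [Finset.card_filter, Finset.card_filter, Finset.card_filter, ← Finset.sum_add_distrib]
  refine Finset.sum_congr rfl fun z hz => ?_
  rcases lt_trichotomy z.im 0 with hlt | heq | hgt
  · simp only [dd, if_neg (ne_of_lt hlt), if_neg (not_lt.mpr (le_of_lt hlt))]
    by_cases hc : 𝔠 H z = 0
    · simp [hc]
    · have hpos := norm_pos_iff.mpr hc
      rw [if_neg (by linarith), if_pos (by linarith), if_pos hc]
  · simp only [dd, if_pos heq]
    have hcr := 𝔠_real H heq
    rcases lt_trichotomy (H.eval z.re) 0 with h1 | h1 | h1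
    · rw [if_neg (by linarith), if_pos h1, if_pos (by rw [hcr]; exact_mod_cast h1.ne)]
    · rw [if_neg (by linarith), if_neg (by linarith), if_neg (by rw [hcr, h1]; simp)]
    · rw [if_pos h1, if_neg (by linarith), if_pos (by rw [hcr]; exact_mod_cast h1.ne')]
  · simp only [dd, if_neg (ne_of_gt hgt), if_pos hgt]
    by_cases hc : 𝔠 H z = 0
    · simp [hc]
    · have hpos := norm_pos_iff.mpr hc
      rw [if_pos (by linarith), if_neg (by linarith), if_pos hc]

end Counting
end
end PRS18

/-- Pederson–Roy–Szpirglas theorem, univariate form: for `A = ℝ[X]/⟨g⟩` with `g` monic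
squarefree and `h` the image of `H ∈ ℝ[X]`, the generalized trace form
`Φ_h(f,f') = Tr(λ_{h f f'})` has signature `#{a real root of g : H(a) > 0} −
#{a real root of g : H(a) < 0}` and rank `#{z complex root of g : H(z) ≠ 0}`. -/
theorem stmt_18 (g : Polynomial ℝ) (hg : g.Monic) (hsf : Squarefree g)
    (H : Polynomial ℝ)
    (h : Polynomial ℝ ⧸ Ideal.span {g})
    (hh : h = Ideal.Quotient.mk (Ideal.span {g}) H)
    (Φ : (Polynomial ℝ ⧸ Ideal.span {g}) →ₗ[ℝ] (Polynomial ℝ ⧸ Ideal.span {g}) →ₗ[ℝ] ℝ)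
    (hΦ : ∀ f f' : Polynomial ℝ ⧸ Ideal.span {g},
      Φ f f' = Algebra.traceForm ℝ (Polynomial ℝ ⧸ Ideal.span {g}) (h * f) f')
    (p q : ℕ) (hT : Φ.IsTypeOf p q) :
    (p : ℤ) - q =
      (Multiset.card (g.roots.filter (fun a => 0 < H.eval a)) : ℤ) -
        Multiset.card (g.roots.filter (fun a => H.eval a < 0)) ∧
    p + q = Multiset.card (((g.map (algebraMap ℝ ℂ)).roots).filter
      (fun z => (H.map (algebraMap ℝ ℂ)).eval z ≠ 0)) := by
  classical
  obtain ⟨hTp, hTq⟩ := hT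
  haveI hfin : Module.Finite ℝ (Polynomial ℝ ⧸ Ideal.span {g}) :=
    Module.Finite.of_basis (AdjoinRoot.powerBasisAux' hg)
  have hfr : Module.finrank ℝ (Polynomial ℝ ⧸ Ideal.span {g}) = g.natDegree := by
    exact (AdjoinRoot.powerBasis' hg).finrank
  have hp : p = ((PRS18.Rf g).filter (fun z => 0 < PRS18.dd H z)).card := by
    have hmem : ∃ W : Submodule ℝ (Polynomial ℝ ⧸ Ideal.span {g}),
        Module.finrank ℝ W = ((PRS18.Rf g).filter (fun z => 0 < PRS18.dd H z)).card ∧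
        ∀ x ∈ W, x ≠ 0 → 0 < Φ x x := by
      refine ⟨PRS18.Wsub H g _, PRS18.finrank_Wsub hg hsf (Finset.filter_subset _ _), ?_⟩
      intro x hx hx0
      obtain ⟨cc, hxe, hq2⟩ := PRS18.quad_Wsub hg hsf hh hΦ (Finset.filter_subset _ _) hx
      rw [hq2]
      have hccne : ∃ z, cc z ≠ 0 := by
        by_contra hall
        push_neg at hall
        exact hx0 (by rw [hxe]; exact Finset.sum_eq_zero fun z _ => by rw [hall z, zero_smul])
      obtain ⟨z0, hz0⟩ := hccne
      refine Finset.sum_pos' (fun z _ => ?_) ⟨z0, Finset.mem_univ z0, ?_⟩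
      · exact mul_nonneg (sq_nonneg _) (le_of_lt (Finset.mem_filter.mp z.2).2)
      · have h2 : (0:ℝ) < cc z0 ^ 2 :=
          lt_of_le_of_ne (sq_nonneg _) (Ne.symm (pow_ne_zero 2 hz0))
        exact mul_pos h2 (Finset.mem_filter.mp z0.2).2
    have hge := hTp.2 hmem
    obtain ⟨Wp, hWp_rank, hWp_pos⟩ := hTp.1
    have hdisj : Disjoint Wp
        (PRS18.Wsub H g ((PRS18.Rf g).filter (fun z => ¬ 0 < PRS18.dd H z))) := by
      rw [Submodule.disjoint_def]
      intro x hxW hxN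
      by_contra hx0
      obtain ⟨cc, hxe, hq2⟩ := PRS18.quad_Wsub hg hsf hh hΦ (Finset.filter_subset _ _) hxN
      have hle : Φ x x ≤ 0 := by
        rw [hq2]
        refine Finset.sum_nonpos fun z _ => ?_
        have hdz := (Finset.mem_filter.mp z.2).2
        nlinarith [sq_nonneg (cc z), not_lt.mp hdz]
      linarith [hWp_pos x hxW hx0]
    have hsum_le := Submodule.finrank_add_finrank_le_of_disjoint hdisj
    rw [hWp_rank, PRS18.finrank_Wsub hg hsf (Finset.filter_subset _ _), hfr] at hsum_le
    have hsplit := Finset.card_filter_add_card_filter_not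
      (s := PRS18.Rf g) (p := fun z => 0 < PRS18.dd H z)
    rw [PRS18.card_Rf hg hsf] at hsplit
    omega
  have hq : q = ((PRS18.Rf g).filter (fun z => PRS18.dd H z < 0)).card := by
    have hmem : ∃ W : Submodule ℝ (Polynomial ℝ ⧸ Ideal.span {g}),
        Module.finrank ℝ W = ((PRS18.Rf g).filter (fun z => PRS18.dd H z < 0)).card ∧
        ∀ x ∈ W, x ≠ 0 → Φ x x < 0 := by
      refine ⟨PRS18.Wsub H g _, PRS18.finrank_Wsub hg hsf (Finset.filter_subset _ _), ?_⟩
      intro x hx hx0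
      obtain ⟨cc, hxe, hq2⟩ := PRS18.quad_Wsub hg hsf hh hΦ (Finset.filter_subset _ _) hx
      rw [hq2]
      have hccne : ∃ z, cc z ≠ 0 := by
        by_contra hall
        push_neg at hall
        exact hx0 (by rw [hxe]; exact Finset.sum_eq_zero fun z _ => by rw [hall z, zero_smul])
      obtain ⟨z0, hz0⟩ := hccne
      have hlt : ∑ z, (cc z)^2 * PRS18.dd H ↑z < ∑ _z : ↥((PRS18.Rf g).filter
          (fun z => PRS18.dd H z < 0)), (0:ℝ) := by
        refine Finset.sum_lt_sum (fun z _ => ?_) ⟨z0, Finset.mem_univ z0, ?_⟩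
        · have hdz := (Finset.mem_filter.mp z.2).2
          nlinarith [sq_nonneg (cc z)]
        · have h2 : (0:ℝ) < cc z0 ^ 2 :=
            lt_of_le_of_ne (sq_nonneg _) (Ne.symm (pow_ne_zero 2 hz0))
          have hdz := (Finset.mem_filter.mp z0.2).2
          nlinarith
      simpa using hlt
    have hge := hTq.2 hmem
    obtain ⟨Wn, hWn_rank, hWn_neg⟩ := hTq.1
    have hdisj : Disjoint Wn
        (PRS18.Wsub H g ((PRS18.Rf g).filter (fun z => ¬ PRS18.dd H z < 0))) := by
      rw [Submodule.disjoint_def]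
      intro x hxW hxN
      by_contra hx0
      obtain ⟨cc, hxe, hq2⟩ := PRS18.quad_Wsub hg hsf hh hΦ (Finset.filter_subset _ _) hxN
      have hle : 0 ≤ Φ x x := by
        rw [hq2]
        refine Finset.sum_nonneg fun z _ => ?_
        have hdz := (Finset.mem_filter.mp z.2).2
        nlinarith [sq_nonneg (cc z), not_lt.mp hdz]
      linarith [hWn_neg x hxW hx0]
    have hsum_le := Submodule.finrank_add_finrank_le_of_disjoint hdisj
    rw [hWn_rank, PRS18.finrank_Wsub hg hsf (Finset.filter_subset _ _), hfr] at hsum_le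
    have hsplit := Finset.card_filter_add_card_filter_not
      (s := PRS18.Rf g) (p := fun z => PRS18.dd H z < 0)
    rw [PRS18.card_Rf hg hsf] at hsplit
    omega
  constructor
  · have e1 := PRS18.count_real (H := H) hg hsf (fun t => 0 < t)
    have e2 := PRS18.count_real (H := H) hg hsf (fun t => t < 0)
    rw [hp, hq, PRS18.count_pos_split hg hsf, PRS18.count_neg_split hg hsf,
      PRS18.count_conj_pair hg, e1, e2]
    push_cast
    ring
  · rw [hp, hq]
    exact PRS18.count_rank hg hsf
end

section
/- Let K be an infinite perfect field, 𝔄 ⊆ K[X₁,…,Xₙ] a radical ideal such that A = K[X₁,…,Xₙ]/𝔄 is finite-dimensional over K, and assume the last coordinates of the points of V_{K̄}(𝔄) ⊆ K̄ⁿ are pairwise distinct. Then there exist polynomials g₁,…,g_{n−1}, g_n ∈ K[T] with g_n squarefree of degree m = dim_K A such that 𝔄 = ⟨X₁ − g₁(Xₙ), …, X_{n−1} − g_{n−1}(Xₙ), g_n(Xₙ)⟩. In particular, 1, xₙ, …, xₙ^{m−1} is a K-basis of A, where xₙ is the image of Xₙ. -/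
open MvPolynomial

open Polynomial

theorem shape_core (K : Type*) [Field K] [PerfectField K] (A : Type*) [CommRing A]
    [Algebra K A] [IsReduced A] [Nontrivial A] [FiniteDimensional K A] (x : A)
    (hinj : Function.Injective fun σ : A →ₐ[K] AlgebraicClosure K => σ x) :
    Function.Surjective (Polynomial.aeval x : K[X] →ₐ[K] A) ∧
      (minpoly K x).natDegree = Module.finrank K A ∧ Squarefree (minpoly K x) ∧
      ∃ b : Module.Basis (Fin (minpoly K x).natDegree) K A, ∀ k, b k = x ^ (k : ℕ) := by
  classical
  have hint : IsIntegral K x := Algebra.IsIntegral.isIntegral x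
  set p := minpoly K x with hp
  have hp0 : p ≠ 0 := minpoly.ne_zero hint
  haveI : IsArtinianRing A := IsArtinianRing.of_finite K A
  -- the injection AdjoinRoot p → A
  set ι : AdjoinRoot p →ₐ[K] A := AdjoinRoot.liftAlgHom p (Algebra.ofId K A) x (minpoly.aeval K x) with hι
  have hιinj : Function.Injective ι := by
    intro a b hab
    obtain ⟨f, rfl⟩ := AdjoinRoot.mk_surjective a
    obtain ⟨g, rfl⟩ := AdjoinRoot.mk_surjective b
    have : Polynomial.aeval x (f - g) = 0 := by
      simp only [hι, AdjoinRoot.liftAlgHom_mk] at hab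
      rw [map_sub, sub_eq_zero]; exact hab
    have hdvd := minpoly.dvd K x this
    rw [AdjoinRoot.mk_eq_mk]
    exact hdvd
  haveI : FiniteDimensional K (AdjoinRoot p) :=
    (AdjoinRoot.powerBasis hp0).finite
  have hdimAR : Module.finrank K (AdjoinRoot p) = p.natDegree :=
    (AdjoinRoot.powerBasis hp0).finrank
  -- upper bound: finrank A ≤ natDegree p
  -- maximal ideals
  set M := {I : Ideal A | I.IsMaximal} with hM
  haveI : Finite M := (IsArtinianRing.setOfPred_isMaximal_finite A).to_subtype
  haveI : Fintype M := Fintype.ofFinite M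
  haveI hFD : ∀ I : M, FiniteDimensional K (A ⧸ I.1) := fun I =>
    Module.Finite.of_surjective (Ideal.Quotient.mkₐ K I.1).toLinearMap
      Ideal.Quotient.mk_surjective
  have hΦ : Function.Injective
      (LinearMap.pi (fun I : M => (Ideal.Quotient.mkₐ K I.1).toLinearMap) : A →ₗ[K] _) := by
    rw [← LinearMap.ker_eq_bot, eq_bot_iff]
    intro a ha
    simp only [LinearMap.mem_ker, LinearMap.pi_apply] at ha
    have hmem : a ∈ Ideal.jacobson (⊥ : Ideal A) := by
      rw [Ideal.jacobson]
      refine Ideal.mem_sInf.mpr ?_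
      rintro J ⟨-, hJ⟩
      rw [← Ideal.Quotient.eq_zero_iff_mem]
      simpa using congrFun ha ⟨J, hJ⟩
    obtain ⟨k, hk⟩ := IsArtinianRing.isNilpotent_jacobson_bot (R := A)
    have : a ^ k = 0 := by
      have : a ^ k ∈ (Ideal.jacobson (⊥ : Ideal A)) ^ k := Ideal.pow_mem_pow hmem k
      rwa [hk, Ideal.zero_eq_bot, Ideal.mem_bot] at this
    have : IsNilpotent a := ⟨k, this⟩
    simpa using this.eq_zero
  have h1 : Module.finrank K A ≤ ∑ I : M, Module.finrank K (A ⧸ I.1) := by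
    have := LinearMap.finrank_le_finrank_of_injective hΦ
    rwa [Module.finrank_pi_fintype] at this
  -- each quotient is a separable field extension
  have h2 : ∀ I : M, Module.finrank K (A ⧸ I.1) = Nat.card ((A ⧸ I.1) →ₐ[K] AlgebraicClosure K) := by
    intro I
    haveI : I.1.IsMaximal := I.2
    letI : Field (A ⧸ I.1) := Ideal.Quotient.field I.1
    haveI : Algebra.IsAlgebraic K (A ⧸ I.1) := Algebra.IsAlgebraic.of_finite _ _
    haveI : Algebra.IsSeparable K (A ⧸ I.1) := inferInstance
    rw [Nat.card_eq_fintype_card, AlgHom.card]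
  set Kb := AlgebraicClosure K with hKb
  have hroot : ∀ σ : A →ₐ[K] Kb, σ x ∈ (p.map (algebraMap K Kb)).roots.toFinset := by
    intro σ
    rw [Multiset.mem_toFinset, Polynomial.mem_roots']
    refine ⟨(Polynomial.map_ne_zero_iff (algebraMap K Kb).injective).mpr hp0, ?_⟩
    have hpev : Polynomial.aeval x p = 0 := minpoly.aeval K x
    rw [Polynomial.IsRoot, Polynomial.eval_map, ← Polynomial.aeval_def,
      Polynomial.aeval_algHom_apply, hpev, map_zero]
  haveI hfin : Finite (A →ₐ[K] Kb) :=
    Finite.of_injective (fun σ => (⟨σ x, hroot σ⟩ : {y // y ∈ (p.map (algebraMap K Kb)).roots.toFinset}))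
      (fun a b h => hinj (congrArg Subtype.val h))
  have hker : ∀ (I : M) (ψ : (A ⧸ I.1) →ₐ[K] Kb) (a : A),
      ψ (Ideal.Quotient.mk I.1 a) = 0 ↔ a ∈ I.1 := by
    intro I ψ a
    haveI : I.1.IsMaximal := I.2
    letI : Field (A ⧸ I.1) := Ideal.Quotient.field I.1
    constructor
    · intro h
      rw [← Ideal.Quotient.eq_zero_iff_mem]
      exact (map_eq_zero_iff ψ ψ.toRingHom.injective).mp h
    · intro h
      rw [Ideal.Quotient.eq_zero_iff_mem.mpr h, map_zero]
  haveI hfinI : ∀ I : M, Finite ((A ⧸ I.1) →ₐ[K] Kb) := by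
    intro I
    haveI : I.1.IsMaximal := I.2
    letI : Field (A ⧸ I.1) := Ideal.Quotient.field I.1
    infer_instance
  have h3 : ∑ I : M, Nat.card ((A ⧸ I.1) →ₐ[K] Kb) ≤ Nat.card (A →ₐ[K] Kb) := by
    have hcs : Nat.card ((I : M) × ((A ⧸ I.1) →ₐ[K] Kb))
        = ∑ I : M, Nat.card ((A ⧸ I.1) →ₐ[K] Kb) := by
      haveI := fun I : M => Fintype.ofFinite ((A ⧸ I.1) →ₐ[K] Kb)
      simp [Nat.card_eq_fintype_card, Fintype.card_sigma]
    rw [← hcs]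
    apply Nat.card_le_card_of_injective
      (fun s : (I : M) × ((A ⧸ I.1) →ₐ[K] Kb) => s.2.comp (Ideal.Quotient.mkₐ K s.1.1))
    rintro ⟨I, ψ⟩ ⟨J, χ⟩ h
    have hval : ∀ a : A, ψ (Ideal.Quotient.mk I.1 a) = χ (Ideal.Quotient.mk J.1 a) := by
      intro a
      exact DFunLike.congr_fun h a
    obtain rfl : I = J := by
      apply Subtype.ext
      ext a
      rw [← hker I ψ a, ← hker J χ a, hval a]
    have hψχ : ψ = χ := AlgHom.ext fun q => by
      obtain ⟨a, rfl⟩ := Ideal.Quotient.mk_surjective q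
      exact hval a
    rw [hψχ]
  have h4 : Nat.card (A →ₐ[K] Kb) ≤ p.natDegree := by
    calc Nat.card (A →ₐ[K] Kb)
        ≤ Nat.card {y // y ∈ (p.map (algebraMap K Kb)).roots.toFinset} :=
          Nat.card_le_card_of_injective (fun σ => ⟨σ x, hroot σ⟩)
            (fun a b h => hinj (congrArg Subtype.val h))
      _ = (p.map (algebraMap K Kb)).roots.toFinset.card :=
          Nat.card_eq_finsetCard _
      _ ≤ Multiset.card (p.map (algebraMap K Kb)).roots := Multiset.toFinset_card_le _
      _ ≤ (p.map (algebraMap K Kb)).natDegree := Polynomial.card_roots' _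
      _ = p.natDegree := Polynomial.natDegree_map_eq_of_injective
          (algebraMap K Kb).injective p
  have hle : Module.finrank K A ≤ p.natDegree := by
    calc Module.finrank K A ≤ ∑ I : M, Module.finrank K (A ⧸ I.1) := h1
      _ = ∑ I : M, Nat.card ((A ⧸ I.1) →ₐ[K] Kb) := Finset.sum_congr rfl (fun I _ => h2 I)
      _ ≤ Nat.card (A →ₐ[K] Kb) := h3
      _ ≤ p.natDegree := h4
  have hge : p.natDegree ≤ Module.finrank K A := by
    have := LinearMap.finrank_le_finrank_of_injective (f := ι.toLinearMap) hιinj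
    rwa [hdimAR] at this
  have hdeg : p.natDegree = Module.finrank K A := le_antisymm hge hle
  -- surjectivity
  have hrange : LinearMap.range ι.toLinearMap = ⊤ := by
    apply Submodule.eq_top_of_finrank_eq
    rw [LinearMap.finrank_range_of_inj hιinj, hdimAR, hdeg]
  have hsurjι : Function.Surjective ι := fun a => LinearMap.range_eq_top.mp hrange a
  have hsurj : Function.Surjective (Polynomial.aeval x : K[X] →ₐ[K] A) := by
    intro a
    obtain ⟨z, hz⟩ := hsurjι a
    obtain ⟨f, rfl⟩ := AdjoinRoot.mk_surjective z
    exact ⟨f, hz⟩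
  -- squarefree
  have hsq : Squarefree p := by
    intro y hy
    obtain ⟨r, hr⟩ := hy
    have hy0 : y ≠ 0 := by rintro rfl; simp at hr; exact hp0 hr
    have hr0 : r ≠ 0 := by rintro rfl; simp at hr; exact hp0 hr
    have hpev : Polynomial.aeval x p = 0 := minpoly.aeval K x
    have hz : Polynomial.aeval x (y * r) = 0 := by
      have h2 : (Polynomial.aeval x (y * r)) ^ 2 = 0 := by
        rw [← map_pow]
        have hpr : (y * r) ^ 2 = p * r := by rw [hr]; ring
        rw [hpr, map_mul, hpev, zero_mul]
      exact IsNilpotent.eq_zero ⟨2, h2⟩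
    have hdvd : p ∣ y * r := minpoly.dvd K x hz
    have hyr0 : y * r ≠ 0 := mul_ne_zero hy0 hr0
    have hdle := Polynomial.natDegree_le_of_dvd hdvd hyr0
    rw [hr, Polynomial.natDegree_mul (mul_ne_zero hy0 hy0) hr0,
      Polynomial.natDegree_mul hy0 hy0, Polynomial.natDegree_mul hy0 hr0] at hdle
    have hyd : y.natDegree = 0 := by omega
    rw [Polynomial.eq_C_of_natDegree_eq_zero hyd]
    refine Polynomial.isUnit_C.mpr (isUnit_iff_ne_zero.mpr fun h => hy0 ?_)
    rw [Polynomial.eq_C_of_natDegree_eq_zero hyd, h, map_zero]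
  refine ⟨hsurj, hdeg, hsq, ?_⟩
  refine ⟨(AdjoinRoot.powerBasis hp0).basis.map
    (LinearEquiv.ofBijective ι.toLinearMap ⟨hιinj, hsurjι⟩), fun k => ?_⟩
  have hb : (AdjoinRoot.powerBasis hp0).basis k = AdjoinRoot.root p ^ (k : ℕ) := by
    have h5 := congrFun (AdjoinRoot.powerBasis hp0).coe_basis k
    rwa [AdjoinRoot.powerBasis_gen] at h5
  calc ((AdjoinRoot.powerBasis hp0).basis.map
        (LinearEquiv.ofBijective ι.toLinearMap ⟨hιinj, hsurjι⟩)) k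
      = (LinearEquiv.ofBijective ι.toLinearMap ⟨hιinj, hsurjι⟩)
          ((AdjoinRoot.powerBasis hp0).basis k) := Module.Basis.map_apply _ _ _
    _ = (LinearEquiv.ofBijective ι.toLinearMap ⟨hιinj, hsurjι⟩)
          (AdjoinRoot.root p ^ (k : ℕ)) := congrArg _ hb
    _ = x ^ (k : ℕ) := by
        show ι (AdjoinRoot.root p ^ (k : ℕ)) = x ^ (k : ℕ)
        rw [map_pow, hι]; exact congrArg (· ^ (k : ℕ)) (AdjoinRoot.liftAlgHom_root _ _ _ _)

/-- Shape Lemma. -/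
theorem stmt_19 (K : Type*) [Field K] [Infinite K] [PerfectField K] (n : ℕ)
    (𝔄 : Ideal (MvPolynomial (Fin (n + 1)) K)) (hrad : 𝔄.IsRadical)
    [FiniteDimensional K (MvPolynomial (Fin (n + 1)) K ⧸ 𝔄)]
    (hpos : ∀ a b : Fin (n + 1) → AlgebraicClosure K,
      (∀ F ∈ 𝔄, MvPolynomial.aeval a F = 0) →
      (∀ F ∈ 𝔄, MvPolynomial.aeval b F = 0) →
      a (Fin.last n) = b (Fin.last n) → a = b) :
    ∃ g : Fin (n + 1) → Polynomial K,
      Squarefree (g (Fin.last n)) ∧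
      (g (Fin.last n)).natDegree = Module.finrank K (MvPolynomial (Fin (n + 1)) K ⧸ 𝔄) ∧
      𝔄 = Ideal.span
        ((Set.range fun i : Fin n =>
            MvPolynomial.X i.castSucc -
              Polynomial.aeval (MvPolynomial.X (Fin.last n)) (g i.castSucc)) ∪
          {Polynomial.aeval (MvPolynomial.X (Fin.last n)) (g (Fin.last n))}) ∧
      ∃ b : Module.Basis (Fin (Module.finrank K (MvPolynomial (Fin (n + 1)) K ⧸ 𝔄))) K
          (MvPolynomial (Fin (n + 1)) K ⧸ 𝔄),
        ∀ k, b k = (Ideal.Quotient.mk 𝔄 (MvPolynomial.X (Fin.last n))) ^ (k : ℕ) := by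
  classical
  haveI hred : IsReduced (MvPolynomial (Fin (n + 1)) K ⧸ 𝔄) :=
    (Ideal.isRadical_iff_quotient_reduced 𝔄).mp hrad
  rcases subsingleton_or_nontrivial (MvPolynomial (Fin (n + 1)) K ⧸ 𝔄) with hsub | hnt
  · -- degenerate case : 𝔄 = ⊤
    have hT : 𝔄 = ⊤ := Ideal.Quotient.subsingleton_iff.mp hsub
    have h0 : Module.finrank K (MvPolynomial (Fin (n + 1)) K ⧸ 𝔄) = 0 :=
      Module.finrank_zero_of_subsingleton
    refine ⟨fun _ => 1, squarefree_one, by simp [h0], ?_, ?_⟩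
    · rw [hT]
      refine ((Ideal.eq_top_iff_one _).mpr (Ideal.subset_span ?_)).symm
      refine Set.mem_union_right _ ?_
      simp
    · haveI : IsEmpty (Fin (Module.finrank K (MvPolynomial (Fin (n + 1)) K ⧸ 𝔄))) := by
        rw [h0]; infer_instance
      exact ⟨Module.Basis.empty _, fun k => isEmptyElim k⟩
  · -- main case
    set x := Ideal.Quotient.mk 𝔄 (MvPolynomial.X (Fin.last n)) with hx
    have key : ∀ (σ : (MvPolynomial (Fin (n + 1)) K ⧸ 𝔄) →ₐ[K] AlgebraicClosure K)
        (F : MvPolynomial (Fin (n + 1)) K),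
        MvPolynomial.aeval (fun i => σ (Ideal.Quotient.mk 𝔄 (MvPolynomial.X i))) F
          = σ (Ideal.Quotient.mk 𝔄 F) := by
      intro σ F
      have h1 := MvPolynomial.aeval_unique (σ.comp (Ideal.Quotient.mkₐ K 𝔄))
      exact (DFunLike.congr_fun h1 F).symm
    have hinj : Function.Injective
        (fun σ : (MvPolynomial (Fin (n + 1)) K ⧸ 𝔄) →ₐ[K] AlgebraicClosure K => σ x) := by
      intro σ τ hστ
      have hσ : ∀ F ∈ 𝔄,
          MvPolynomial.aeval (fun i => σ (Ideal.Quotient.mk 𝔄 (MvPolynomial.X i))) F = 0 :=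
        fun F hF => by rw [key σ F, Ideal.Quotient.eq_zero_iff_mem.mpr hF, map_zero]
      have hτ : ∀ F ∈ 𝔄,
          MvPolynomial.aeval (fun i => τ (Ideal.Quotient.mk 𝔄 (MvPolynomial.X i))) F = 0 :=
        fun F hF => by rw [key τ F, Ideal.Quotient.eq_zero_iff_mem.mpr hF, map_zero]
      have heq := hpos _ _ hσ hτ hστ
      apply AlgHom.ext
      intro q
      obtain ⟨F, rfl⟩ := Ideal.Quotient.mk_surjective q
      rw [← key σ F, ← key τ F, heq]
    obtain ⟨hsurj, hdeg, hsq, b0, hb0⟩ :=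
      shape_core K (MvPolynomial (Fin (n + 1)) K ⧸ 𝔄) x hinj
    have hg' : ∀ i : Fin n, ∃ q : Polynomial K,
        Polynomial.aeval x q = Ideal.Quotient.mk 𝔄 (MvPolynomial.X i.castSucc) :=
      fun i => hsurj _
    choose g' hgspec using hg'
    set g : Fin (n + 1) → Polynomial K := Fin.snoc g' (minpoly K x) with hgdef
    have hglast : g (Fin.last n) = minpoly K x := Fin.snoc_last _ _
    have hgcs : ∀ i : Fin n, g i.castSucc = g' i := fun i => Fin.snoc_castSucc _ _ i
    set S : Set (MvPolynomial (Fin (n + 1)) K) :=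
      (Set.range fun i : Fin n =>
          MvPolynomial.X i.castSucc -
            Polynomial.aeval (MvPolynomial.X (Fin.last n)) (g i.castSucc)) ∪
        {Polynomial.aeval (MvPolynomial.X (Fin.last n)) (g (Fin.last n))} with hS
    have hmkρ : ∀ q : Polynomial K,
        Ideal.Quotient.mk 𝔄 (Polynomial.aeval (MvPolynomial.X (Fin.last n)) q)
          = Polynomial.aeval x q :=
      fun q => (Polynomial.aeval_algHom_apply (Ideal.Quotient.mkₐ K 𝔄)
        (MvPolynomial.X (Fin.last n)) q).symm
    have hIle : Ideal.span S ≤ 𝔄 := by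
      rw [Ideal.span_le]
      intro F hF
      rw [hS] at hF
      simp only [Set.mem_union, Set.mem_range, Set.mem_singleton_iff] at hF
      rcases hF with ⟨i, rfl⟩ | rfl
      · rw [SetLike.mem_coe, ← Ideal.Quotient.mk_eq_mk_iff_sub_mem, hmkρ, hgcs, hgspec i]
      · rw [SetLike.mem_coe, ← Ideal.Quotient.eq_zero_iff_mem, hmkρ, hglast, minpoly.aeval]
    -- the substitution homomorphism
    set h : Fin (n + 1) → Polynomial K := Fin.snoc g' Polynomial.X with hhdef
    have hcomp : (Ideal.Quotient.mkₐ K (Ideal.span S)).comp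
        ((Polynomial.aeval (MvPolynomial.X (Fin.last n)) :
            Polynomial K →ₐ[K] MvPolynomial (Fin (n + 1)) K).comp (MvPolynomial.aeval h))
        = Ideal.Quotient.mkₐ K (Ideal.span S) := by
      apply MvPolynomial.algHom_ext
      intro i
      simp only [AlgHom.comp_apply, MvPolynomial.aeval_X]
      refine Fin.lastCases ?_ ?_ i
      · rw [hhdef, Fin.snoc_last, Polynomial.aeval_X]
      · intro j
        rw [hhdef, Fin.snoc_castSucc, Ideal.Quotient.mkₐ_eq_mk,
          Ideal.Quotient.mk_eq_mk_iff_sub_mem]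
        have hmem : (MvPolynomial.X j.castSucc -
            Polynomial.aeval (MvPolynomial.X (Fin.last n)) (g j.castSucc)) ∈ Ideal.span S :=
          Ideal.subset_span (Set.mem_union_left _ ⟨j, rfl⟩)
        have hneg := (Ideal.span S).neg_mem hmem
        rw [neg_sub, hgcs] at hneg
        exact hneg
    have hC1 : ∀ F : MvPolynomial (Fin (n + 1)) K,
        F - Polynomial.aeval (MvPolynomial.X (Fin.last n)) (MvPolynomial.aeval h F)
          ∈ Ideal.span S := by
      intro F
      have h6 := DFunLike.congr_fun hcomp F
      simp only [AlgHom.comp_apply, Ideal.Quotient.mkₐ_eq_mk] at h6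
      exact (Ideal.Quotient.mk_eq_mk_iff_sub_mem _ _).mp h6.symm
    refine ⟨g, by rw [hglast]; exact hsq, by rw [hglast]; exact hdeg, ?_, ?_⟩
    · refine le_antisymm ?_ hIle
      intro F hF
      have h6 := hC1 F
      have hρq𝔄 : Polynomial.aeval (MvPolynomial.X (Fin.last n)) (MvPolynomial.aeval h F) ∈ 𝔄 := by
        have h7 := 𝔄.sub_mem hF (hIle h6)
        rwa [sub_sub_cancel] at h7
      have hq0 : Polynomial.aeval x (MvPolynomial.aeval h F) = 0 := by
        rw [← hmkρ]
        exact Ideal.Quotient.eq_zero_iff_mem.mpr hρq𝔄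
      obtain ⟨r, hrq⟩ := minpoly.dvd K x hq0
      have hρqI : Polynomial.aeval (MvPolynomial.X (Fin.last n)) (MvPolynomial.aeval h F)
          ∈ Ideal.span S := by
        rw [hrq, map_mul]
        refine Ideal.mul_mem_right _ _ (Ideal.subset_span (Set.mem_union_right _ ?_))
        simp [hglast]
      have h8 : F = (F - Polynomial.aeval (MvPolynomial.X (Fin.last n))
          (MvPolynomial.aeval h F)) + Polynomial.aeval (MvPolynomial.X (Fin.last n))
          (MvPolynomial.aeval h F) := by ring
      rw [h8]
      exact (Ideal.span S).add_mem h6 hρqI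
    · refine ⟨b0.reindex (finCongr hdeg), fun k => ?_⟩
      rw [Module.Basis.reindex_apply, hb0]
      rfl
end
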